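/- arXiv:1306.0108 — 8 statements merged into one kernel-verified Lean document; each statement's English description precedes it below -/
import Mathlib

section
/- For a ring R the following are equivalent: (1) R is strongly P-clean; (2) the quotient ring R/P(R) is Boolean; (3) for every x ∈ R there exists an idempotent e ∈ R such that x − e ∈ P(R); (4) for every x ∈ R there exists an idempotent e ∈ comm²(x) such that x − e ∈ P(R). -/
/-- An element `a` of a ring is strongly nilpotent if every sequence
`a = a₀, a₁, a₂, …` with `a_{i+1} ∈ a_i R a_i` is eventually zero. -/
def IsStronglyNilpotent {R : Type*} [Ring R] (a : R) : Prop :=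
  ∀ f : ℕ → R, f 0 = a → (∀ i, ∃ r : R, f (i + 1) = f i * r * f i) → ∃ n, f n = 0

/-- The prime radical `P(R)`: the set of strongly nilpotent elements
(equivalently, the intersection of all prime ideals). -/
def primeRadical (R : Type*) [Ring R] : Set R :=
  {a | IsStronglyNilpotent a}

/-- An element is strongly P-clean if it is the sum of an idempotent and an
element of the prime radical that commute. -/
def IsStronglyPClean {R : Type*} [Ring R] (x : R) : Prop :=
  ∃ e w : R, IsIdempotentElem e ∧ w ∈ primeRadical R ∧ x = e + w ∧ e * w = w * e

/-- A ring is strongly P-clean if each of its elements is strongly P-clean. -/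
def StronglyPCleanRing (R : Type*) [Ring R] : Prop :=
  ∀ x : R, IsStronglyPClean x

/-- `comm²(x)`: the set of elements commuting with everything that commutes
with `x`. -/
def comm2 {R : Type*} [Ring R] (x : R) : Set R :=
  {r | ∀ y : R, x * y = y * x → r * y = y * r}

namespace PCleanAux

variable {R : Type*} [Ring R]

lemma mem_primeRadical {a : R} : a ∈ primeRadical R ↔ IsStronglyNilpotent a := Iff.rfl

lemma snil_mul_left (c : R) {w : R} (hw : IsStronglyNilpotent w) :
    IsStronglyNilpotent (c * w) := by
  intro f h0 hstep
  choose r hr using hstep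
  let g : ℕ → R := fun n => Nat.rec w (fun i gi => gi * (r i * c) * gi) n
  have hfg : ∀ n, f n = c * g n := by
    intro n
    induction n with
    | zero => simpa [g] using h0
    | succ i ih =>
      rw [hr i, ih]
      show c * g i * r i * (c * g i) = c * (g i * (r i * c) * g i)
      simp [mul_assoc]
  obtain ⟨n, hn⟩ := hw g rfl (fun i => ⟨r i * c, rfl⟩)
  exact ⟨n, by rw [hfg n, hn, mul_zero]⟩

lemma snil_mul_right {w : R} (hw : IsStronglyNilpotent w) (c : R) :
    IsStronglyNilpotent (w * c) := by
  intro f h0 hstep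
  choose r hr using hstep
  let g : ℕ → R := fun n => Nat.rec w (fun i gi => gi * (c * r i) * gi) n
  have hfg : ∀ n, f n = g n * c := by
    intro n
    induction n with
    | zero => simpa [g] using h0
    | succ i ih =>
      rw [hr i, ih]
      show g i * c * r i * (g i * c) = g i * (c * r i) * g i * c
      simp [mul_assoc]
  obtain ⟨n, hn⟩ := hw g rfl (fun i => ⟨c * r i, rfl⟩)
  exact ⟨n, by rw [hfg n, hn, zero_mul]⟩

lemma snil_pow_two_pow {t : R} (ht : IsStronglyNilpotent t) : ∃ n, t ^ (2 ^ n) = 0 := by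
  refine ht (fun i => t ^ (2 ^ i)) (by simp) (fun i => ⟨1, ?_⟩)
  show t ^ (2 ^ (i + 1)) = t ^ (2 ^ i) * 1 * t ^ (2 ^ i)
  rw [mul_one, ← pow_add, pow_succ, Nat.mul_two]

/-- A two-sided ideal, as a set with closure properties. -/
def IsIdl (S : Set R) : Prop :=
  (0 : R) ∈ S ∧ (∀ a ∈ S, ∀ b ∈ S, a + b ∈ S) ∧
    (∀ c : R, ∀ a ∈ S, c * a ∈ S) ∧ (∀ a ∈ S, ∀ c : R, a * c ∈ S)

lemma IsIdl.neg_mem {S : Set R} (hS : IsIdl S) {a : R} (ha : a ∈ S) : -a ∈ S := by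
  simpa using hS.2.2.1 (-1) a ha

lemma chain_mem {S : Set R} (hS : IsIdl S) {f : ℕ → R}
    (hstep : ∀ i, ∃ r, f (i + 1) = f i * r * f i) {m n : ℕ} (hmn : m ≤ n)
    (hm : f m ∈ S) : f n ∈ S := by
  induction n, hmn using Nat.le_induction with
  | base => exact hm
  | succ n hmn ih =>
    obtain ⟨r, hr⟩ := hstep n
    rw [hr]
    exact hS.2.2.2 _ (hS.2.2.2 _ ih _) _

lemma exists_prime_avoid {u : R} (hu : ¬ IsStronglyNilpotent u) :
    ∃ P : Set R, IsIdl P ∧ u ∉ P ∧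
      ∀ a b : R, a ∉ P → b ∉ P → ∃ r, a * r * b ∉ P := by
  rw [IsStronglyNilpotent] at hu
  push_neg at hu
  obtain ⟨f, h0, hstep, hne⟩ := hu
  set 𝒜 : Set (Set R) := {S | IsIdl S ∧ ∀ n, f n ∉ S} with h𝒜
  have h0A : ({0} : Set R) ∈ 𝒜 := by
    refine ⟨⟨rfl, ?_, ?_, ?_⟩, fun n hn => hne n (by simpa using hn)⟩
    · rintro a rfl b rfl; simp
    · rintro c a rfl; simp
    · rintro a rfl c; simp
  have hub : ∀ c ⊆ 𝒜, IsChain (· ⊆ ·) c → c.Nonempty → ∃ ub ∈ 𝒜, ∀ s ∈ c, s ⊆ ub := by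
    intro c hc hchain hcne
    refine ⟨⋃₀ c, ⟨⟨?_, ?_, ?_, ?_⟩, ?_⟩, fun s hs => Set.subset_sUnion_of_mem hs⟩
    · obtain ⟨s, hs⟩ := hcne
      exact ⟨s, hs, (hc hs).1.1⟩
    · rintro a ⟨s, hs, has⟩ b ⟨t, ht, hbt⟩
      rcases hchain.total hs ht with h | h
      · exact ⟨t, ht, (hc ht).1.2.1 a (h has) b hbt⟩
      · exact ⟨s, hs, (hc hs).1.2.1 a has b (h hbt)⟩
    · rintro cc a ⟨s, hs, has⟩
      exact ⟨s, hs, (hc hs).1.2.2.1 cc a has⟩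
    · rintro a ⟨s, hs, has⟩ cc
      exact ⟨s, hs, (hc hs).1.2.2.2 a has cc⟩
    · rintro n ⟨s, hs, hns⟩
      exact (hc hs).2 n hns
  obtain ⟨P, -, hPmax⟩ := zorn_subset_nonempty 𝒜 hub {0} h0A
  obtain ⟨hPidl, hPavoid⟩ := hPmax.1
  refine ⟨P, hPidl, by rw [← h0]; exact hPavoid 0, ?_⟩
  intro a b ha hb
  by_contra hcon
  push_neg at hcon
  let T : R → Set R := fun a => {z | ∃ x y : R, z = x * a * y}
  let gen : R → Set R := fun a => ↑(AddSubgroup.closure (P ∪ T a))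
  have hsub : ∀ a : R, P ⊆ gen a := fun a z hz =>
    AddSubgroup.subset_closure (Set.mem_union_left _ hz)
  have hmem : ∀ a : R, a ∈ gen a := fun a =>
    AddSubgroup.subset_closure (Set.mem_union_right _ ⟨1, 1, by simp⟩)
  have hgenIdl : ∀ a : R, IsIdl (gen a) := by
    intro a
    refine ⟨(AddSubgroup.closure _).zero_mem, fun p hp q hq => add_mem hp hq, ?_, ?_⟩
    · intro c z hz
      induction hz using AddSubgroup.closure_induction with
      | mem w hw =>
        rcases hw with hw | ⟨x, y, rfl⟩
        · exact AddSubgroup.subset_closure (Set.mem_union_left _ (hPidl.2.2.1 c w hw))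
        · exact AddSubgroup.subset_closure
            (Set.mem_union_right _ ⟨c * x, y, by simp [mul_assoc]⟩)
      | zero => rw [mul_zero]; exact (AddSubgroup.closure (P ∪ T a)).zero_mem
      | add p q hp hq ihp ihq => rw [mul_add]; exact add_mem ihp ihq
      | neg p hp ihp => rw [mul_neg]; exact neg_mem ihp
    · intro z hz c
      induction hz using AddSubgroup.closure_induction with
      | mem w hw =>
        rcases hw with hw | ⟨x, y, rfl⟩
        · exact AddSubgroup.subset_closure (Set.mem_union_left _ (hPidl.2.2.2 w hw c))
        · exact AddSubgroup.subset_closure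
            (Set.mem_union_right _ ⟨x, y * c, by simp [mul_assoc]⟩)
      | zero => rw [zero_mul]; exact (AddSubgroup.closure (P ∪ T a)).zero_mem
      | add p q hp hq ihp ihq => rw [add_mul]; exact add_mem ihp ihq
      | neg p hp ihp => rw [neg_mul]; exact neg_mem ihp
  have hmeet : ∀ x : R, x ∉ P → ∃ m, f m ∈ gen x := by
    intro x hx
    by_contra hno
    push_neg at hno
    have hA : gen x ∈ 𝒜 := ⟨hgenIdl x, hno⟩
    have := hPmax.2 hA (hsub x)
    exact hx (this (hmem x))
  obtain ⟨m, hma⟩ := hmeet a ha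
  obtain ⟨n, hnb⟩ := hmeet b hb
  have hfa : f (max m n) ∈ gen a := chain_mem (hgenIdl a) hstep (le_max_left m n) hma
  have hfb : f (max m n) ∈ gen b := chain_mem (hgenIdl b) hstep (le_max_right m n) hnb
  have key : ∀ p ∈ gen a, ∀ (r : R), ∀ q ∈ gen b, p * r * q ∈ P := by
    intro p hp
    induction hp using AddSubgroup.closure_induction with
    | mem w hw =>
      intro r q hq
      rcases hw with hw | ⟨x, y, rfl⟩
      · rw [mul_assoc]
        exact hPidl.2.2.2 w hw _
      · induction hq using AddSubgroup.closure_induction with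
        | mem v hv =>
          rcases hv with hv | ⟨x', y', rfl⟩
          · exact hPidl.2.2.1 _ _ hv
          · have h1 : a * (y * r * x') * b ∈ P := hcon (y * r * x')
            have h2 : x * (a * (y * r * x') * b) * y' ∈ P :=
              hPidl.2.2.2 _ (hPidl.2.2.1 x _ h1) y'
            have h3 : x * a * y * r * (x' * b * y') = x * (a * (y * r * x') * b) * y' := by
              simp only [mul_assoc]
            rwa [h3]
        | zero => simpa using hPidl.1
        | add v v' hv hv' ihv ihv' =>
          rw [mul_add]
          exact hPidl.2.1 _ ihv _ ihv'
        | neg v hv ihv =>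
          rw [mul_neg]
          exact hPidl.neg_mem ihv
    | zero =>
      intro r q hq
      simpa using hPidl.1
    | add p p' hp hp' ihp ihp' =>
      intro r q hq
      rw [add_mul, add_mul]
      exact hPidl.2.1 _ (ihp r q hq) _ (ihp' r q hq)
    | neg p hp ihp =>
      intro r q hq
      rw [neg_mul, neg_mul]
      exact hPidl.neg_mem (ihp r q hq)
  obtain ⟨r, hr⟩ := hstep (max m n)
  exact hPavoid (max m n + 1) (by rw [hr]; exact key _ hfa r _ hfb)

lemma snil_mem_prime {P : Set R} (hP : IsIdl P)
    (hprime : ∀ a b : R, a ∉ P → b ∉ P → ∃ r, a * r * b ∉ P)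
    {v : R} (hv : IsStronglyNilpotent v) : v ∈ P := by
  by_contra hvP
  have step : ∀ x : {x : R // x ∉ P}, ∃ y : {x : R // x ∉ P}, ∃ r, (y : R) = x * r * x := by
    rintro ⟨x, hx⟩
    obtain ⟨r, hr⟩ := hprime x x hx hx
    exact ⟨⟨x * r * x, hr⟩, r, rfl⟩
  choose next r hnext using step
  let g : ℕ → {x : R // x ∉ P} := fun n => Nat.rec ⟨v, hvP⟩ (fun _ gi => next gi) n
  let F : ℕ → R := fun n => (g n).1
  have hF0 : F 0 = v := rfl
  have hFstep : ∀ i, ∃ s, F (i + 1) = F i * s * F i := fun i => ⟨r (g i), hnext (g i)⟩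
  obtain ⟨n, hn⟩ := hv F hF0 hFstep
  have hFn : F n ∈ P := by rw [hn]; exact hP.1
  exact (g n).2 hFn

lemma snil_add {v w : R} (hv : IsStronglyNilpotent v) (hw : IsStronglyNilpotent w) :
    IsStronglyNilpotent (v + w) := by
  by_contra h
  obtain ⟨P, hPidl, hPu, hPprime⟩ := exists_prime_avoid h
  exact hPu (hPidl.2.1 _ (snil_mem_prime hPidl hPprime hv) _ (snil_mem_prime hPidl hPprime hw))

open Polynomial in
/-- Newton iteration for lifting idempotents. -/
noncomputable def newton : ℕ → Polynomial ℤ :=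
  fun n => Nat.rec X (fun _ q => 3 * q ^ 2 - 2 * q ^ 3) n

open Polynomial

lemma newton_identity {S : Type*} [CommRing S] (a : S) :
    (3 * a ^ 2 - 2 * a ^ 3) - (3 * a ^ 2 - 2 * a ^ 3) ^ 2
      = (a - a ^ 2) ^ 2 * (4 - (2 * a - 1) ^ 2) := by ring

lemma newton_dvd_sq (k : ℕ) :
    ((X : Polynomial ℤ) - X ^ 2) ^ (2 ^ k) ∣ (newton k - (newton k) ^ 2) := by
  induction k with
  | zero => simp [newton]
  | succ k ih =>
    have h1 : newton (k + 1) - (newton (k + 1)) ^ 2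
        = (newton k - (newton k) ^ 2) ^ 2 * (4 - (2 * newton k - 1) ^ 2) := by
      show (3 * newton k ^ 2 - 2 * newton k ^ 3) -
          (3 * newton k ^ 2 - 2 * newton k ^ 3) ^ 2 = _
      exact newton_identity (newton k)
    rw [h1, show (2:ℕ) ^ (k + 1) = 2 ^ k * 2 from pow_succ 2 k, pow_mul]
    exact dvd_mul_of_dvd_left (pow_dvd_pow_of_dvd ih 2) _

lemma newton_dvd_lin (k : ℕ) :
    ((X : Polynomial ℤ) - X ^ 2) ∣ (X - newton k) := by
  induction k with
  | zero => simp [newton]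
  | succ k ih =>
    have h1 : (X : Polynomial ℤ) - newton (k + 1)
        = (X - newton k) + (-((newton k - (newton k) ^ 2) * (2 * newton k - 1))) := by
      show (X : Polynomial ℤ) - (3 * newton k ^ 2 - 2 * newton k ^ 3) = _
      ring
    rw [h1]
    refine dvd_add ih (dvd_neg.mpr (Dvd.dvd.mul_right ?_ _))
    exact (dvd_pow_self _ (Nat.pos_of_ne_zero (by positivity)).ne').trans (newton_dvd_sq k)

lemma commute_aeval {x y : R} (h : x * y = y * x) (q : Polynomial ℤ) :
    (aeval x q) * y = y * (aeval x q) := by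
  have hxy : Commute x y := h
  induction q using Polynomial.induction_on with
  | C a => simpa using (Int.cast_commute a y).eq
  | add p q hp hq => simp only [map_add, add_mul, mul_add, hp, hq]
  | monomial n a _ =>
    simp only [map_mul, aeval_C, map_pow, aeval_X]
    exact (((Int.cast_commute a y)).mul_left (hxy.pow_left (n + 1))).symm.eq.symm

/-- The key construction: (2) implies (4). -/
lemma construction {x : R} (h2 : ∀ x : R, x - x * x ∈ primeRadical R) :
    ∃ e : R, IsIdempotentElem e ∧ e ∈ comm2 x ∧ x - e ∈ primeRadical R := by
  have ht : IsStronglyNilpotent (x - x * x) := h2 x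
  obtain ⟨n, hn⟩ := snil_pow_two_pow ht
  set e := aeval x (newton n) with he_def
  have haev : aeval x ((X : Polynomial ℤ) - X ^ 2) = x - x * x := by
    simp [pow_two]
  refine ⟨e, ?_, fun y hy => commute_aeval hy _, ?_⟩
  · obtain ⟨c, hc⟩ := newton_dvd_sq n
    have h1 : e - e * e = aeval x (newton n - (newton n) ^ 2) := by
      rw [map_sub, map_pow, pow_two]
    have h2' : e - e * e = 0 := by
      rw [h1, hc, map_mul, map_pow, haev, hn, zero_mul]
    have := sub_eq_zero.mp h2'
    exact this.symm
  · obtain ⟨d, hd⟩ := newton_dvd_lin n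
    have h1 : x - e = (x - x * x) * aeval x d := by
      have h2' : x - e = aeval x ((X : Polynomial ℤ) - newton n) := by
        rw [map_sub, aeval_X]
      rw [h2', hd, map_mul, haev]
    rw [mem_primeRadical, h1]
    exact snil_mul_right ht _

end PCleanAux

open PCleanAux in
/-- **Theorem 2.4.** For a ring `R` the following are equivalent:
(1) `R` is strongly P-clean;
(2) `R/P(R)` is Boolean, i.e. `x - x² ∈ P(R)` for all `x`;
(3) for every `x` there is an idempotent `e` with `x - e ∈ P(R)`;
(4) for every `x` there is an idempotent `e ∈ comm²(x)` with `x - e ∈ P(R)`. -/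
theorem stronglyPCleanRing_tfae (R : Type*) [Ring R] :
    [StronglyPCleanRing R,
     ∀ x : R, x - x * x ∈ primeRadical R,
     ∀ x : R, ∃ e : R, IsIdempotentElem e ∧ x - e ∈ primeRadical R,
     ∀ x : R, ∃ e : R, IsIdempotentElem e ∧ e ∈ comm2 x ∧ x - e ∈ primeRadical R].TFAE := by
  tfae_have 1 → 2 := by
    intro h1 x
    obtain ⟨e, w, he, hw, hx, hcomm⟩ := h1 x
    have he' : e * e = e := he
    have key : x - x * x = w * (1 - 2 * e - w) := by
      calc x - x * x = (e + w) - (e + w) * (e + w) := by rw [← hx]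
        _ = (e - e * e) + ((w * e - e * w) + (w - w * e - w * e - w * w)) := by noncomm_ring
        _ = (e - e * e) + ((w * e - w * e) + (w - w * e - w * e - w * w)) := by rw [hcomm]
        _ = w * (1 - 2 * e - w) := by rw [he']; noncomm_ring
    rw [mem_primeRadical, key]
    exact snil_mul_right hw _
  tfae_have 2 → 4 := by
    intro h2 x
    exact construction h2
  tfae_have 4 → 3 := by
    intro h4 x
    obtain ⟨e, he, -, hw⟩ := h4 x
    exact ⟨e, he, hw⟩
  tfae_have 4 → 1 := by
    intro h4 x
    obtain ⟨e, he, hec, hw⟩ := h4 x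
    have hex : e * x = x * e := hec x rfl
    refine ⟨e, x - e, he, hw, by abel, ?_⟩
    rw [mul_sub, sub_mul, hex]
  tfae_have 3 → 2 := by
    intro h3 x
    obtain ⟨e, he, hw⟩ := h3 x
    have he' : e * e = e := he
    have hx : x = e + (x - e) := by abel
    have key : x - x * x = (1 - e) * (x - e) + (x - e) * (-e - (x - e)) := by
      calc x - x * x = (e + (x - e)) - (e + (x - e)) * (e + (x - e)) := by rw [← hx]
        _ = (e - e * e) + ((1 - e) * (x - e) + (x - e) * (-e - (x - e))) := by noncomm_ring
        _ = (1 - e) * (x - e) + (x - e) * (-e - (x - e)) := by rw [he']; noncomm_ring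
    rw [mem_primeRadical, key]
    exact snil_add (snil_mul_left _ hw) (snil_mul_right hw _)
  tfae_finish
end

section
/- A ring R is strongly P-clean if and only if (1) R is periodic, and (2) every element of 1 + U(R) is strongly nilpotent (i.e., lies in P(R)). -/
open Polynomial

/-- A ring is periodic if for every element `x` there are positive integers
`m < n` with `x^m = x^n`. -/
def IsPeriodicRing (R : Type*) [Ring R] : Prop :=
  ∀ x : R, ∃ m n : ℕ, 0 < m ∧ m < n ∧ x ^ m = x ^ n

section Aux

variable {R : Type*} [Ring R]

lemma IsStronglyNilpotent.isNilpotent {a : R} (h : IsStronglyNilpotent a) :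
    IsNilpotent a := by
  obtain ⟨n, hn⟩ := h (fun i => a ^ (2 ^ i)) (by simp)
    (fun i => ⟨1, by
      show a ^ 2 ^ (i + 1) = a ^ 2 ^ i * 1 * a ^ 2 ^ i
      rw [mul_one, ← pow_add, pow_succ, mul_two]⟩)
  exact ⟨2 ^ n, hn⟩

lemma mem_primeRadical_isNilpotent {a : R} (h : a ∈ primeRadical R) :
    IsNilpotent a :=
  IsStronglyNilpotent.isNilpotent h

/-- From periodicity, get an idempotent positive power. -/
lemma exists_pow_idem (x : R) {m n : ℕ} (hm : 0 < m) (hmn : m < n) (hx : x ^ m = x ^ n) :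
    ∃ s' : ℕ, x ^ (s' + 1) * x ^ (s' + 1) = x ^ (s' + 1) := by
  set d := n - m with hd
  have hd1 : 0 < d := by omega
  have h1 : ∀ j, x ^ (m + j) = x ^ (m + j + d) := by
    intro j
    rw [pow_add, hx, ← pow_add]
    congr 1
    omega
  have h2 : ∀ i j, x ^ (m + j) = x ^ (m + j + i * d) := by
    intro i
    induction i with
    | zero => simp
    | succ i ih =>
      intro j
      have e1 : m + j + (i + 1) * d = m + (j + i * d) + d := by
        rw [Nat.succ_mul]; omega
      rw [e1, ← h1 (j + i * d), ← add_assoc, ← ih j]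
  have hms : m ≤ m * d := Nat.le_mul_of_pos_right m hd1
  have hpos : 0 < m * d := Nat.mul_pos hm hd1
  have h3 := h2 m (m * d - m)
  rw [Nat.add_sub_cancel' hms] at h3
  refine ⟨m * d - 1, ?_⟩
  rw [Nat.sub_add_cancel hpos, ← pow_add, ← h3]

end Aux

/-- Core periodicity lemma via a finite quotient ring. -/
lemma periodic_of_nilpotent_data {R : Type*} [Ring R] (x : R) (k c : ℕ)
    (hk : (x ^ 2 - x) ^ (k + 1) = 0) (hc : (2 : R) ^ (c + 1) = 0) :
    ∃ m n : ℕ, 0 < m ∧ m < n ∧ x ^ m = x ^ n := by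
  set N := 2 ^ (c + 1) with hN
  haveI : NeZero N := ⟨by positivity⟩
  haveI : Fact (1 < N) := ⟨by simp [hN, Nat.one_lt_two_pow_iff]⟩
  set q : (ZMod N)[X] := (X ^ 2 - X) ^ (k + 1) with hq
  have hmonic : q.Monic := by
    have h2X : (X ^ 2 - X : (ZMod N)[X]) = X * (X - C 1) := by rw [C_1]; ring
    rw [hq, h2X]
    exact (monic_X.mul (monic_X_sub_C 1)).pow _
  haveI : Finite (AdjoinRoot q) := by
    let pb := AdjoinRoot.powerBasis' hmonic
    exact Finite.of_equiv _ pb.basis.equivFun.toEquiv.symm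
  have key : ∀ i j : ℕ, i < j → (AdjoinRoot.root q) ^ (i + 1) = (AdjoinRoot.root q) ^ (j + 1) →
      ∃ m n : ℕ, 0 < m ∧ m < n ∧ x ^ m = x ^ n := by
    intro i j hij hr
    refine ⟨i + 1, j + 1, Nat.succ_pos i, by omega, ?_⟩
    have hmk : AdjoinRoot.mk q ((X : (ZMod N)[X]) ^ (i + 1) - X ^ (j + 1)) = 0 := by
      rw [map_sub, map_pow, map_pow, AdjoinRoot.mk_X, sub_eq_zero]
      exact hr
    obtain ⟨g, hg⟩ := (AdjoinRoot.mk_eq_zero).mp hmk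
    obtain ⟨g₀, hg₀⟩ := Polynomial.map_surjective (Int.castRingHom (ZMod N))
      ZMod.intCast_surjective g
    set D : ℤ[X] := ((X : ℤ[X]) ^ (i + 1) - X ^ (j + 1)) - (X ^ 2 - X) ^ (k + 1) * g₀ with hD
    have hDmap : D.map (Int.castRingHom (ZMod N)) = 0 := by
      simp only [hD, Polynomial.map_sub, Polynomial.map_mul, Polynomial.map_pow,
        Polynomial.map_X, hg₀, ← hq]
      rw [← hg, sub_self]
    have hcdvd : (C (N : ℤ)) ∣ D := by
      rw [Polynomial.C_dvd_iff_dvd_coeff]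
      intro t
      have h0 : ((D.coeff t : ℤ) : ZMod N) = 0 := by
        have := congrArg (fun p => Polynomial.coeff p t) hDmap
        simpa [Polynomial.coeff_map] using this
      exact_mod_cast (ZMod.intCast_zmod_eq_zero_iff_dvd _ _).mp h0
    obtain ⟨H, hH⟩ := hcdvd
    have heval := congrArg (Polynomial.aeval x) hH
    rw [hD, map_sub, map_sub, map_mul, map_pow, map_pow, map_pow, map_sub, map_pow,
      aeval_X, map_mul, aeval_C] at heval
    rw [hk, zero_mul, sub_zero] at heval
    have hNR : (algebraMap ℤ R) (N : ℤ) = 0 := by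
      rw [hN]
      push_cast
      exact_mod_cast hc
    rw [hNR, zero_mul, sub_eq_zero] at heval
    exact heval
  obtain ⟨i, j, hij, hpow⟩ := Finite.exists_ne_map_eq_of_infinite
    (fun t : ℕ => (AdjoinRoot.root q) ^ (t + 1))
  rcases lt_or_gt_of_ne hij with h | h
  · exact key i j h hpow
  · exact key j i h hpow.symm

lemma two_nilpotent_of_spc {R : Type*} [Ring R] (h : StronglyPCleanRing R) :
    IsNilpotent (2 : R) := by
  obtain ⟨e, w, he, hwP, heq, hcom⟩ := h 2
  have hwn : IsNilpotent w := mem_primeRadical_isNilpotent hwP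
  have hE : e = 2 - w := by rw [heq]; abel
  have he2 : ((2 : R) - w) * ((2 : R) - w) = 2 - w := by rw [← hE]; exact he
  have h23 : w * (3 - w) = (2 : R) - (((2 : R) - w) * ((2 : R) - w) - ((2 : R) - w)) := by
    noncomm_ring
  rw [he2, sub_self, sub_zero] at h23
  rw [← h23]
  have hcomm : Commute w ((3 : R) - w) := by
    show w * (3 - w) = (3 - w) * w
    noncomm_ring
  exact hcomm.isNilpotent_mul_right hwn

lemma periodic_of_spc {R : Type*} [Ring R] (h : StronglyPCleanRing R) :
    IsPeriodicRing R := by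
  obtain ⟨c, hc⟩ := two_nilpotent_of_spc h
  have hc' : (2 : R) ^ (c + 1) = 0 := by rw [pow_succ, hc, zero_mul]
  intro x
  obtain ⟨e, w, he, hwP, heq, hcom⟩ := h x
  obtain ⟨k, hk⟩ := mem_primeRadical_isNilpotent hwP
  have hxw : x ^ 2 - x = w * (2 * e + w - 1) := by
    have key : (e + w) * (e + w) - (e + w)
        = w * (2 * e + w - 1) + (e * e - e) + (e * w - w * e) := by noncomm_ring
    rw [he, hcom, sub_self, sub_self, add_zero, add_zero] at key
    rw [heq, pow_two]
    exact key
  have hcomm : Commute w (2 * e + w - 1) := by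
    have h1 : Commute w e := hcom.symm
    have h2 : Commute w (2 * e) := by rw [two_mul]; exact h1.add_right h1
    exact (h2.add_right (Commute.refl w)).sub_right (Commute.one_right w)
  have hnk : (x ^ 2 - x) ^ (k + 1) = 0 := by
    rw [hxw, hcomm.mul_pow, pow_succ, hk, zero_mul, zero_mul]
  exact periodic_of_nilpotent_data x k c hnk hc'

lemma one_add_unit_of_spc {R : Type*} [Ring R] (h : StronglyPCleanRing R) (u : Rˣ) :
    (1 + (u : R)) ∈ primeRadical R := by
  have h2n := two_nilpotent_of_spc h
  obtain ⟨e, w, he, hwP, heq, hcom⟩ := h (u : R)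
  replace hcom : Commute e w := hcom
  obtain ⟨k, hk⟩ := mem_primeRadical_isNilpotent hwP
  have hcu : Commute w (u : R) := by
    rw [heq]; exact hcom.symm.add_right (Commute.refl w)
  have hcui : Commute w ((u⁻¹ : Rˣ) : R) := hcu.units_inv_right
  have hnui : IsNilpotent (((u⁻¹ : Rˣ) : R) * w) := hcui.symm.isNilpotent_mul_left ⟨k, hk⟩
  have heunit : IsUnit e := by
    have hE : e = (u : R) * (1 - ((u⁻¹ : Rˣ) : R) * w) := by
      rw [mul_sub, mul_one, ← mul_assoc, Units.mul_inv, one_mul, heq]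
      abel
    rw [hE]
    exact u.isUnit.mul hnui.isUnit_one_sub
  have he1 : e = 1 := heunit.mul_left_cancel (by rw [he, mul_one])
  have hu1 : (u : R) = 1 + w := by rw [heq, he1]
  have hc2w : Commute (2 : R) w := by
    show (2 : R) * w = w * 2
    rw [two_mul, mul_two]
  have hnil2w : IsNilpotent ((2 : R) + w) := hc2w.isNilpotent_add h2n ⟨k, hk⟩
  obtain ⟨f, v, hf, hvP, heq2, hcom2⟩ := h (1 + (u : R))
  replace hcom2 : Commute f v := hcom2
  have hvn := mem_primeRadical_isNilpotent hvP
  have hcv : Commute v (1 + (u : R)) := by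
    rw [heq2]; exact hcom2.symm.add_right (Commute.refl v)
  have h1u : (1 : R) + (u : R) = 2 + w := by rw [hu1, ← add_assoc, one_add_one_eq_two]
  have hfnil : IsNilpotent f := by
    have hfe : f = (1 + (u : R)) - v := by rw [heq2]; abel
    rw [hfe]
    refine hcv.symm.isNilpotent_sub ?_ hvn
    rw [h1u]; exact hnil2w
  have hf0 : f = 0 := by
    obtain ⟨j, hj⟩ := hfnil
    rw [← hf.pow_succ_eq j, pow_succ, hj, zero_mul]
  have hfin : (1 : R) + (u : R) = v := by rw [heq2, hf0, zero_add]
  rw [hfin]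
  exact hvP

/-- **Corollary 2.5.** A ring `R` is strongly P-clean iff `R` is periodic and
every element of `1 + U(R)` is strongly nilpotent (i.e. lies in `P(R)`). -/
theorem stronglyPCleanRing_iff_periodic_and_one_add_unit_stronglyNilpotent
    (R : Type*) [Ring R] :
    StronglyPCleanRing R ↔
      IsPeriodicRing R ∧ ∀ u : Rˣ, (1 + (u : R)) ∈ primeRadical R := by
  constructor
  · intro h
    exact ⟨periodic_of_spc h, one_add_unit_of_spc h⟩
  · rintro ⟨hper, hP⟩ x
    have h2P : (2 : R) ∈ primeRadical R := by
      have h1 := hP 1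
      rwa [Units.val_one, one_add_one_eq_two] at h1
    obtain ⟨m, n, hm, hmn, hx⟩ := hper x
    obtain ⟨s', he⟩ := exists_pow_idem x hm hmn hx
    have hrel : x ^ (2 * s' + 2) - x ^ (s' + 1) = 0 := by
      have h1 : x ^ (2 * s' + 2) = x ^ (s' + 1) * x ^ (s' + 1) := by
        rw [← pow_add]; congr 1; omega
      rw [h1, he, sub_self]
    have evalfact : ∀ P Q : ℤ[X],
        P * Q = 1 + (X ^ (s' + 1) + X + X ^ s' + 2) * (X ^ (2 * s' + 2) - X ^ (s' + 1)) →
        (aeval x) P * (aeval x) Q = 1 := by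
      intro P Q hPQ
      rw [← map_mul, hPQ, map_add, map_one, map_mul, map_sub, map_pow, map_pow, aeval_X, hrel,
        mul_zero, add_zero]
    have hpoly1 : (X ^ (s' + 2) + X ^ (s' + 1) - 1 : ℤ[X]) * (X ^ (2 * s' + 1) + X ^ (s' + 1) - 1)
        = 1 + (X ^ (s' + 1) + X + X ^ s' + 2) * (X ^ (2 * s' + 2) - X ^ (s' + 1)) := by ring
    have hpoly2 : (X ^ (2 * s' + 1) + X ^ (s' + 1) - 1 : ℤ[X]) * (X ^ (s' + 2) + X ^ (s' + 1) - 1)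
        = 1 + (X ^ (s' + 1) + X + X ^ s' + 2) * (X ^ (2 * s' + 2) - X ^ (s' + 1)) := by ring
    have hUV : (x ^ (s' + 2) + x ^ (s' + 1) - 1) * (x ^ (2 * s' + 1) + x ^ (s' + 1) - 1) = 1 := by
      have hh := evalfact _ _ hpoly1
      simpa only [map_add, map_sub, map_pow, map_one, aeval_X] using hh
    have hVU : (x ^ (2 * s' + 1) + x ^ (s' + 1) - 1) * (x ^ (s' + 2) + x ^ (s' + 1) - 1) = 1 := by
      have hh := evalfact _ _ hpoly2
      simpa only [map_add, map_sub, map_pow, map_one, aeval_X] using hh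
    have hUunit : IsUnit (x ^ (s' + 2) + x ^ (s' + 1) - 1) :=
      ⟨⟨_, _, hUV, hVU⟩, rfl⟩
    have hxp : ∀ j : ℕ, Commute x (x ^ j) := fun j => (Commute.refl x).pow_right j
    have hpp : ∀ i j : ℕ, Commute (x ^ i) (x ^ j) := fun i j => (Commute.refl x).pow_pow i j
    have hb : (x - x ^ (s' + 2)) ^ (s' + 1) = 0 := by
      have hb1 : x - x ^ (s' + 2) = x * (1 - x ^ (s' + 1)) := by
        rw [mul_sub, mul_one, ← pow_succ']
      have hcx : Commute x (1 - x ^ (s' + 1)) := (Commute.one_right x).sub_right (hxp _)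
      rw [hb1, hcx.mul_pow]
      have h1e : x ^ (s' + 1) * (1 - x ^ (s' + 1)) = 0 := by
        rw [mul_sub, mul_one, he, sub_self]
      have hce : Commute (x ^ (s' + 1)) ((1 - x ^ (s' + 1)) ^ s') :=
        ((Commute.one_right _).sub_right (Commute.refl _)).pow_right _
      rw [pow_succ (1 - x ^ (s' + 1)) s', ← mul_assoc, hce.eq, mul_assoc, h1e, mul_zero]
    have hbnil : IsNilpotent (x - x ^ (s' + 2)) := ⟨s' + 1, hb⟩
    have hc2 : ∀ y : R, Commute (2 : R) y := fun y => by
      show (2 : R) * y = y * 2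
      rw [two_mul, mul_two]
    have h2en : IsNilpotent (2 * x ^ (s' + 1)) :=
      (hc2 _).isNilpotent_mul_right (mem_primeRadical_isNilpotent h2P)
    have hA1 : Commute (x - x ^ (s' + 2)) (x ^ (s' + 1)) := (hxp _).sub_left (hpp _ _)
    have hcbe : Commute (x - x ^ (s' + 2)) (2 * x ^ (s' + 1)) :=
      (hc2 _).symm.mul_right hA1
    have hnnil : IsNilpotent (x - x ^ (s' + 2) - 2 * x ^ (s' + 1)) :=
      hcbe.isNilpotent_sub hbnil h2en
    have hAe : ∀ j : ℕ, Commute (x - x ^ (s' + 2) - 2 * x ^ (s' + 1)) (x ^ j) := fun j =>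
      ((hxp j).sub_left (hpp _ j)).sub_left ((hc2 _).mul_left (hpp _ j))
    have hcnU : Commute (x - x ^ (s' + 2) - 2 * x ^ (s' + 1))
        (x ^ (s' + 2) + x ^ (s' + 1) - 1) :=
      ((hAe _).add_right (hAe _)).sub_right (Commute.one_right _)
    have huval : IsUnit (x - x ^ (s' + 1) - 1) := by
      have hsum : x - x ^ (s' + 1) - 1
          = (x - x ^ (s' + 2) - 2 * x ^ (s' + 1)) + (x ^ (s' + 2) + x ^ (s' + 1) - 1) := by
        rw [two_mul]; abel
      rw [hsum]
      exact hnnil.isUnit_add_right_of_commute hUunit hcnU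
    obtain ⟨u, hu⟩ := huval
    have hmem := hP u
    rw [hu, show (1 : R) + (x - x ^ (s' + 1) - 1) = x - x ^ (s' + 1) from by abel] at hmem
    refine ⟨x ^ (s' + 1), x - x ^ (s' + 1), he, hmem, by abel, ?_⟩
    exact ((hxp (s' + 1)).symm.sub_right (Commute.refl _)).eq
end

section
/- Let I be a nilpotent ideal of a ring R. Then R is strongly P-clean if and only if R/I is strongly P-clean. -/
/-- A two-sided ideal `I` is nilpotent if `Iⁿ = 0` for some positive `n`;
equivalently, every product of `n` elements of `I` vanishes. -/
def TwoSidedIdeal.IsNilpotentIdeal {R : Type*} [Ring R] (I : TwoSidedIdeal R) : Prop :=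
  ∃ n : ℕ, 0 < n ∧ ∀ f : Fin n → R, (∀ i, f i ∈ I) → (List.ofFn f).prod = 0

/- ### Auxiliary lemmas -/

section Aux

open Polynomial

/-- A strongly nilpotent element multiplied on the right stays strongly nilpotent. -/
lemma IsStronglyNilpotent.mul_right' {R : Type*} [Ring R] {t : R}
    (ht : IsStronglyNilpotent t) (c : R) : IsStronglyNilpotent (t * c) := by
  intro f hf0 hstep
  choose r hr using hstep
  let g : ℕ → R := fun n => Nat.rec t (fun i gi => gi * (c * r i) * gi) n
  have hfg : ∀ i, f i = g i * c := by
    intro i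
    induction i with
    | zero => simpa [g] using hf0
    | succ i ih =>
      rw [hr i, ih]
      show _ = (g i * (c * r i) * g i) * c
      noncomm_ring
  obtain ⟨n, hn⟩ := ht g rfl (fun i => ⟨c * r i, rfl⟩)
  exact ⟨n, by rw [hfg n, hn, zero_mul]⟩

/-- Strongly nilpotent elements are nilpotent. -/
lemma IsStronglyNilpotent.isNilpotent' {R : Type*} [Ring R] {a : R}
    (ha : IsStronglyNilpotent a) : ∃ n, 0 < n ∧ a ^ n = 0 := by
  obtain ⟨n, hn⟩ := ha (fun i => a ^ (2 ^ i)) (by simp)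
    (fun i => ⟨1, by simp [mul_one, pow_succ, pow_mul]⟩)
  exact ⟨2 ^ n, Nat.pow_pos (by norm_num), hn⟩

/-- Strong nilpotency is preserved by surjective ring homomorphisms. -/
lemma IsStronglyNilpotent.map' {R S : Type*} [Ring R] [Ring S] (φ : R →+* S)
    (hφ : Function.Surjective φ) {a : R} (ha : IsStronglyNilpotent a) :
    IsStronglyNilpotent (φ a) := by
  intro f hf0 hstep
  choose r hr using hstep
  choose rl hrl using fun i => hφ (r i)
  let g : ℕ → R := fun n => Nat.rec a (fun i gi => gi * rl i * gi) n
  have hfg : ∀ i, φ (g i) = f i := by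
    intro i
    induction i with
    | zero => simpa [g] using hf0.symm
    | succ i ih =>
      show φ (g i * rl i * g i) = _
      rw [map_mul, map_mul, ih, hrl, ← hr]
  obtain ⟨n, hn⟩ := ha g rfl (fun i => ⟨rl i, rfl⟩)
  exact ⟨n, by rw [← hfg n, hn, map_zero]⟩

/-- A long enough list of elements of a nilpotent ideal has zero product. -/
lemma prod_eq_zero_of_nilpotentIdeal {R : Type*} [Ring R] {I : TwoSidedIdeal R}
    {n : ℕ} (hn : ∀ f : Fin n → R, (∀ i, f i ∈ I) → (List.ofFn f).prod = 0)
    (l : List R) (hl : ∀ x ∈ l, x ∈ I) (hlen : n ≤ l.length) : l.prod = 0 := by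
  set f : Fin n → R := fun i => l.get ⟨i, lt_of_lt_of_le i.2 hlen⟩ with hf
  have htake : l.take n = List.ofFn f := by
    apply List.ext_getElem
    · simp [min_eq_left hlen]
    · intro i h1 h2
      simp [f, List.getElem_take]
  have h1 : l = l.take n ++ l.drop n := (List.take_append_drop n l).symm
  rw [h1, List.prod_append, htake, hn f (fun i => hl _ (l.get_mem _)), zero_mul]

/-- Strong nilpotency lifts along the quotient by a nilpotent ideal. -/
lemma isStronglyNilpotent_of_quot {R : Type*} [Ring R] (I : TwoSidedIdeal R)
    (hI : I.IsNilpotentIdeal) (a : R)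
    (h : IsStronglyNilpotent ((a : I.ringCon.Quotient))) : IsStronglyNilpotent a := by
  obtain ⟨n, hn0, hn⟩ := hI
  intro f hf0 hstep
  choose r hr using hstep
  have hq : ∃ N, ((f N : I.ringCon.Quotient)) = 0 := by
    apply h (fun i => (f i : I.ringCon.Quotient)) (by simp [hf0])
    intro i
    exact ⟨(r i : I.ringCon.Quotient), by push_cast [hr i]; rfl⟩
  obtain ⟨N, hN⟩ := hq
  have hfN : f N ∈ I := by
    rw [TwoSidedIdeal.mem_iff, ← RingCon.eq]
    exact hN
  have key : ∀ k, ∃ l : List R, l.length = 2 ^ k ∧ (∀ x ∈ l, x ∈ I) ∧ f (N + k) = l.prod := by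
    intro k
    induction k with
    | zero => exact ⟨[f N], by simp, by simpa using hfN, by simp⟩
    | succ k ih =>
      obtain ⟨l, hlen, hmem, hprod⟩ := ih
      obtain ⟨b, l', rfl⟩ : ∃ b l', l = b :: l' := by
        cases l with
        | nil => exact absurd hlen (by simp; positivity)
        | cons b l' => exact ⟨b, l', rfl⟩
      refine ⟨(b :: l') ++ ((r (N + k) * b) :: l'), by simp at hlen ⊢; omega, ?_, ?_⟩
      · intro x hx
        rcases List.mem_append.mp hx with h | h
        · exact hmem x h
        · rcases List.mem_cons.mp h with rfl | h
          · exact I.mul_mem_left _ _ (hmem b List.mem_cons_self)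
          · exact hmem x (List.mem_cons_of_mem _ h)
      · have : N + (k + 1) = (N + k) + 1 := by omega
        rw [this, hr, hprod]
        simp [List.prod_cons, List.prod_append, mul_assoc]
  obtain ⟨l, hlen, hmem, hprod⟩ := key n
  refine ⟨N + n, ?_⟩
  rw [hprod]
  exact prod_eq_zero_of_nilpotentIdeal hn l hmem (by rw [hlen]; exact (Nat.lt_two_pow_self).le)

/-- The key polynomial used to lift idempotents. -/
noncomputable def idemPoly (m : ℕ) : ℤ[X] :=
  ∑ k ∈ Finset.Ico m (2 * m), X ^ k * (1 - X) ^ (2 * m - 1 - k) * ((2 * m - 1).choose k : ℤ[X])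

noncomputable def idemPolyB (m : ℕ) : ℤ[X] :=
  ∑ k ∈ Finset.Ico 0 m, X ^ k * (1 - X) ^ (2 * m - 1 - k) * ((2 * m - 1).choose k : ℤ[X])

lemma idemPoly_add (m : ℕ) (hm : 0 < m) : idemPolyB m + idemPoly m = 1 := by
  have h := add_pow (X : ℤ[X]) (1 - X) (2 * m - 1)
  rw [add_sub_cancel, one_pow] at h
  rw [idemPoly, idemPolyB,
    Finset.sum_Ico_consecutive _ (Nat.zero_le m) (by omega : m ≤ 2 * m),
    ← Finset.range_eq_Ico, (by omega : 2 * m = 2 * m - 1 + 1)]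
  simp only [Nat.add_sub_cancel]
  exact h.symm

lemma X_pow_dvd_idemPoly (m : ℕ) : X ^ m ∣ idemPoly m :=
  Finset.dvd_sum fun k hk =>
    Dvd.dvd.mul_right (Dvd.dvd.mul_right (pow_dvd_pow X (Finset.mem_Ico.mp hk).1) _) _

lemma one_sub_X_pow_dvd (m : ℕ) (hm : 0 < m) : (1 - X : ℤ[X]) ^ m ∣ idemPolyB m := by
  apply Finset.dvd_sum
  intro k hk
  rw [Finset.mem_Ico] at hk
  exact Dvd.dvd.mul_right (Dvd.dvd.mul_left (pow_dvd_pow _ (by omega)) _) _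

lemma idemPoly_sq (m : ℕ) (hm : 0 < m) :
    (X ^ 2 - X : ℤ[X]) ^ m ∣ idemPoly m * idemPoly m - idemPoly m := by
  obtain ⟨p, hp⟩ := X_pow_dvd_idemPoly m
  obtain ⟨q, hq⟩ := one_sub_X_pow_dvd m hm
  have hAB : idemPoly m * idemPoly m - idemPoly m = -(idemPoly m * idemPolyB m) := by
    have h := idemPoly_add m hm
    linear_combination (idemPoly m) * h
  have h1 : (X ^ 2 - X : ℤ[X]) ^ m ∣ (X * (1 - X)) ^ m := by
    have h2 : (X * (1 - X) : ℤ[X]) ^ m = (-1) ^ m * (X ^ 2 - X) ^ m := by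
      rw [← mul_pow]; congr 1; ring
    rw [h2]; exact Dvd.dvd.mul_left dvd_rfl _
  rw [hAB, hp, hq]
  exact dvd_neg.mpr (h1.trans ⟨p * q, by rw [mul_pow]; ring⟩)

lemma idemPoly_sub_X (m : ℕ) (hm : 0 < m) : (X ^ 2 - X : ℤ[X]) ∣ idemPoly m - X := by
  have hcop : IsCoprime (X : ℤ[X]) (X - 1) := ⟨1, -1, by ring⟩
  have h1 : (X : ℤ[X]) ∣ idemPoly m - X := by
    apply dvd_sub _ dvd_rfl
    apply Finset.dvd_sum
    intro k hk
    rw [Finset.mem_Ico] at hk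
    exact Dvd.dvd.mul_right (Dvd.dvd.mul_right
      (dvd_pow_self X (by omega : k ≠ 0)) _) _
  have h2 : (X - 1 : ℤ[X]) ∣ idemPoly m - X := by
    have hC : (X - 1 : ℤ[X]) = X - C 1 := by simp
    rw [hC, dvd_iff_isRoot]
    unfold IsRoot idemPoly
    rw [eval_sub, eval_finset_sum]
    have heval : ∀ k ∈ Finset.Ico m (2 * m),
        eval 1 (X ^ k * (1 - X) ^ (2 * m - 1 - k) * ((2 * m - 1).choose k : ℤ[X]))
        = if k = 2 * m - 1 then 1 else 0 := by
      intro k hk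
      rw [Finset.mem_Ico] at hk
      simp only [eval_mul, eval_pow, eval_X, eval_sub, eval_one, one_pow, one_mul, sub_self]
      by_cases h : k = 2 * m - 1
      · subst h; simp
      · rw [zero_pow (by omega : 2 * m - 1 - k ≠ 0), zero_mul, if_neg h]
    rw [Finset.sum_congr rfl heval,
      Finset.sum_ite_eq' (Finset.Ico m (2 * m)) (2 * m - 1) (fun _ => 1)]
    simp only [Finset.mem_Ico, eval_X]
    rw [if_pos (by omega)]
    ring
  have hmul := hcop.mul_dvd h1 h2
  have heq : (X : ℤ[X]) * (X - 1) = X ^ 2 - X := by ring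
  rwa [heq] at hmul

/-- Characterization: `x` is strongly P-clean iff `x² - x` is strongly nilpotent. -/
lemma isStronglyPClean_iff_snil {R : Type*} [Ring R] (x : R) :
    IsStronglyPClean x ↔ IsStronglyNilpotent (x * x - x) := by
  constructor
  · rintro ⟨e, w, he, hw, rfl, hcomm⟩
    have h : (e + w) * (e + w) - (e + w) = w * (e + e + w - 1) := by
      simp only [add_mul, mul_add, mul_sub, mul_one, he.eq, hcomm]
      abel
    rw [h]
    exact hw.mul_right' _
  · intro h
    obtain ⟨m', hm'0, hpow⟩ := h.isNilpotent'
    set m := m' with hmdef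
    have hm : 0 < m := hm'0
    set φ : ℤ[X] →ₐ[ℤ] R := aeval x with hφ
    have hX : φ X = x := aeval_X x
    have hX2 : φ (X ^ 2 - X) = x * x - x := by
      rw [map_sub, map_pow, hX, sq]
    set e : R := φ (idemPoly m) with hedef
    have he : IsIdempotentElem e := by
      obtain ⟨p, hp⟩ := idemPoly_sq m hm
      have : e * e - e = (x * x - x) ^ m * φ p := by
        rw [← hX2, ← map_pow, ← map_mul, ← map_mul, ← map_sub, hp]
      rw [hpow, zero_mul] at this
      exact sub_eq_zero.mp this
    have hw : IsStronglyNilpotent (x - e) := by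
      obtain ⟨q, hq⟩ := idemPoly_sub_X m hm
      have : e - x = (x * x - x) * φ q := by
        rw [← hX2, ← map_mul, ← hX, ← map_sub, hq]
      have hx : x - e = (x * x - x) * (-(φ q)) := by
        rw [mul_neg, ← this]; abel
      rw [hx]
      exact h.mul_right' _
    have hcomm : e * x = x * e := by
      rw [hedef, ← hX, ← map_mul, ← map_mul, mul_comm]
    refine ⟨e, x - e, he, hw, by abel, ?_⟩
    rw [mul_sub, sub_mul, hcomm, he.eq]

end Aux

/-- **Lemma 2.7.** Let `I` be a nilpotent (two-sided) ideal of a ring `R`. Then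
`R` is strongly P-clean iff `R/I` is strongly P-clean. -/
theorem stronglyPCleanRing_iff_quotient_nilpotent_ideal
    (R : Type*) [Ring R] (I : TwoSidedIdeal R) (hI : I.IsNilpotentIdeal) :
    StronglyPCleanRing R ↔ StronglyPCleanRing I.ringCon.Quotient := by
  have hsurj : Function.Surjective (I.ringCon.mk' : R →+* I.ringCon.Quotient) :=
    fun q => Quot.inductionOn q fun a => ⟨a, rfl⟩
  constructor
  · intro hR xq
    obtain ⟨x, rfl⟩ := hsurj xq
    obtain ⟨e, w, he, hw, hx, hcomm⟩ := hR x
    refine ⟨I.ringCon.mk' e, I.ringCon.mk' w, ?_, ?_, ?_, ?_⟩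
    · show _ * _ = _
      rw [← map_mul, he.eq]
    · exact hw.map' _ hsurj
    · rw [hx, map_add]
    · rw [← map_mul, ← map_mul, hcomm]
  · intro hQ x
    rw [isStronglyPClean_iff_snil]
    apply isStronglyNilpotent_of_quot I hI
    have h1 : ((x * x - x : R) : I.ringCon.Quotient)
        = (x : I.ringCon.Quotient) * x - x := by push_cast; rfl
    rw [h1]
    rw [← isStronglyPClean_iff_snil]
    exact hQ _
end

section
/- Every finite subdirect product of strongly P-clean rings is strongly P-clean. That is, if R is a subring of the direct product R₁ ⊕ ⋯ ⊕ Rₙ such that each projection R → Rᵢ is surjective, and each Rᵢ is strongly P-clean, then R is strongly P-clean. -/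
lemma IsStronglyNilpotent.mul_right {R : Type*} [Ring R] {a : R}
    (ha : IsStronglyNilpotent a) (r : R) : IsStronglyNilpotent (a * r) := by
  intro f hf0 hstep
  choose s hs using hstep
  set g : ℕ → R := fun i => Nat.rec a (fun i gi => gi * (r * s i) * gi) i with hg
  have hfg : ∀ i, f i = g i * r := by
    intro i
    induction i with
    | zero => exact hf0
    | succ i ih =>
      rw [hs i, ih]
      show _ = (g i * (r * s i) * g i) * r
      noncomm_ring
  obtain ⟨m, hm⟩ := ha g rfl (fun i => ⟨r * s i, rfl⟩)
  exact ⟨m, by rw [hfg, hm, zero_mul]⟩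

lemma IsStronglyNilpotent.pow_nilpotent {R : Type*} [Ring R] {a : R}
    (ha : IsStronglyNilpotent a) : ∃ m, a ^ (2 ^ m) = 0 := by
  obtain ⟨m, hm⟩ := ha (fun i => a ^ (2 ^ i)) (by simp)
    (fun i => ⟨1, by show a ^ 2 ^ (i+1) = _; rw [mul_one, ← pow_add, pow_succ, mul_two]⟩)
  exact ⟨m, hm⟩

open Polynomial in
lemma poly_lift (m : ℕ) : ∃ p : Polynomial ℤ,
    (X ^ 2 - X) ∣ (p - X) ∧ (X ^ 2 - X) ^ (m + 1) ∣ (p * p - p) := by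
  induction m with
  | zero => exact ⟨X, ⟨0, by ring⟩, ⟨1, by ring⟩⟩
  | succ m ih =>
    obtain ⟨p, ⟨c, hc⟩, ⟨q, hq⟩⟩ := ih
    refine ⟨3 * p ^ 2 - 2 * p ^ 3, ⟨c - (X ^ 2 - X) ^ m * q * (2 * p - 1), ?_⟩,
      ⟨(X ^ 2 - X) ^ m * q ^ 2 * (4 * (X ^ 2 - X) ^ (m + 1) * q - 3), ?_⟩⟩
    · linear_combination hc - (2 * p - 1) * hq
    · linear_combination (4 * ((p*p-p)^2 + (p*p-p)*((X^2-X)^(m+1)*q) + ((X^2-X)^(m+1)*q)^2)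
        - 3 * ((p*p-p) + (X^2-X)^(m+1)*q)) * hq

/-- If every coordinate of `s` is strongly nilpotent, then `s` is strongly nilpotent in `S`. -/
lemma stronglyNilpotent_of_coords {n : ℕ} {R : Fin n → Type*} [∀ i, Ring (R i)]
    {S : Subring (∀ i, R i)} (s : S)
    (h : ∀ i, IsStronglyNilpotent ((s : ∀ i, R i) i)) : IsStronglyNilpotent s := by
  intro f hf0 hstep
  choose r hr using hstep
  have hcoord : ∀ i : Fin n, ∃ m, ((f m : ∀ j, R j) i) = 0 := by
    intro i
    refine h i (fun k => (f k : ∀ j, R j) i) (by simp [hf0]) (fun k => ⟨(r k : ∀ j, R j) i, ?_⟩)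
    show ((f (k+1) : ∀ j, R j) i) = _
    rw [hr k]
    rfl
  choose N hN using hcoord
  have persist : ∀ (i : Fin n) (k : ℕ), ((f k : ∀ j, R j) i) = 0 → ((f (k+1) : ∀ j, R j) i) = 0 := by
    intro i k hk
    rw [hr k]
    show ((f k : ∀ j, R j) i) * _ * ((f k : ∀ j, R j) i) = 0
    rw [hk, zero_mul, zero_mul]
  refine ⟨(Finset.univ : Finset (Fin n)).sup N, ?_⟩
  ext i
  show ((f _ : ∀ j, R j) i) = (0 : ∀ j, R j) i
  have hle : N i ≤ Finset.univ.sup N := Finset.le_sup (Finset.mem_univ i)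
  have : ∀ k, N i ≤ k → ((f k : ∀ j, R j) i) = 0 := by
    intro k hk
    induction k, hk using Nat.le_induction with
    | base => exact hN i
    | succ k hk ih => exact persist i k ih
  rw [this _ hle]
  rfl


/-- **Lemma 2.9.** Every finite subdirect product of strongly P-clean rings is
strongly P-clean: if `S` is a subring of a finite direct product
`R₁ ⊕ ⋯ ⊕ Rₙ` such that every coordinate projection restricted to `S` is
surjective, and each `Rᵢ` is strongly P-clean, then `S` is strongly P-clean. -/
theorem stronglyPCleanRing_of_finite_subdirect_product
    (n : ℕ) (R : Fin n → Type*) [∀ i, Ring (R i)]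
    (S : Subring (∀ i, R i))
    (hsurj : ∀ i : Fin n, Function.Surjective fun s : S => (s : ∀ i, R i) i)
    (hP : ∀ i, StronglyPCleanRing (R i)) :
    StronglyPCleanRing S := by
  intro x
  -- w = x^2 - x is strongly nilpotent in S
  have hw : IsStronglyNilpotent (x * x - x) := by
    apply stronglyNilpotent_of_coords
    intro i
    obtain ⟨e', w', he', hw', hxe, hcomm⟩ := hP i ((x : ∀ j, R j) i)
    have hval : ((((x * x - x : S) : ∀ j, R j)) i) = w' * (2 * e' + w' - 1) := by
      show (x : ∀ j, R j) i * (x : ∀ j, R j) i - (x : ∀ j, R j) i = _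
      rw [hxe]
      calc (e' + w') * (e' + w') - (e' + w')
          = e' * e' + (e' * w' + (w' * e' + w' * w')) - (e' + w') := by noncomm_ring
        _ = e' + (w' * e' + (w' * e' + w' * w')) - (e' + w') := by rw [he', hcomm]
        _ = w' * (2 * e' + w' - 1) := by noncomm_ring
    rw [hval]
    exact hw'.mul_right _
  obtain ⟨m, hm⟩ := hw.pow_nilpotent
  set Nn : ℕ := 2 ^ m with hNn
  have hN1 : 1 ≤ Nn := Nat.one_le_two_pow
  obtain ⟨p, ⟨c, hc⟩, ⟨q, hq⟩⟩ := poly_lift (Nn - 1)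
  have hNeq : Nn - 1 + 1 = Nn := Nat.sub_add_cancel hN1
  rw [hNeq] at hq
  set φ : Polynomial ℤ →ₐ[ℤ] S := Polynomial.aeval x with hφ
  have hφX : φ Polynomial.X = x := Polynomial.aeval_X x
  have hφt : φ (Polynomial.X ^ 2 - Polynomial.X) = x * x - x := by
    rw [map_sub, map_pow, hφX, sq]
  set e : S := φ p with he
  have hwpow : (x * x - x) ^ Nn = 0 := hm
  have hee : IsIdempotentElem e := by
    have : e * e - e = 0 := by
      have := congrArg φ hq
      rw [map_sub, map_mul, map_mul, map_pow, hφt] at this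
      rw [← he] at this
      rw [this, hwpow, zero_mul]
    exact sub_eq_zero.mp this
  -- x - e is strongly nilpotent
  have hxc : e - x = (x * x - x) * φ c := by
    have := congrArg φ hc
    rwa [map_sub, map_mul, hφt, hφX] at this
  have hxe : IsStronglyNilpotent (x - e) := by
    have : x - e = (x * x - x) * (-(φ c)) := by rw [mul_neg, ← hxc, neg_sub]
    rw [this]
    exact hw.mul_right _
  refine ⟨e, x - e, hee, hxe, by abel, ?_⟩
  have hex : e * x = x * e := by
    rw [← hφX, ← map_mul, ← map_mul, mul_comm]
  rw [mul_sub, sub_mul, hex]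
end

section
/- A ring R is uniquely P-clean if and only if (1) R is abelian (every idempotent of R is central), and (2) R is strongly P-clean. -/
/-- A ring is uniquely P-clean if every element `x` admits a unique idempotent
`e` with `x - e ∈ P(R)`. -/
def UniquelyPCleanRing (R : Type*) [Ring R] : Prop :=
  ∀ x : R, ∃! e : R, IsIdempotentElem e ∧ x - e ∈ primeRadical R

/-- A ring is abelian if every idempotent is central. -/
def IsAbelianRing (R : Type*) [Ring R] : Prop :=
  ∀ e : R, IsIdempotentElem e → ∀ r : R, e * r = r * e

section Aux

variable {R : Type*} [Ring R]

/-- A two-sided "ideal set". -/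
def MyISet (I : Set R) : Prop :=
  (0 : R) ∈ I ∧ (∀ a ∈ I, ∀ b ∈ I, a + b ∈ I) ∧ (∀ (r : R), ∀ a ∈ I, r * a ∈ I) ∧
    (∀ (r : R), ∀ a ∈ I, a * r ∈ I)

/-- "Prime-ish" in the noncommutative sense. -/
def MyPrimeish (I : Set R) : Prop := ∀ x y : R, x ∉ I → y ∉ I → ∃ r : R, x * r * y ∉ I

lemma MyISet.negMem {I : Set R} (hI : MyISet I) {a : R} (ha : a ∈ I) : -a ∈ I := by
  have := hI.2.2.1 (-1) a ha
  rwa [neg_one_mul] at this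

lemma sn_mem_of_primeish {I : Set R} (hI : MyISet I) (hp : MyPrimeish I) {x : R}
    (hx : IsStronglyNilpotent x) : x ∈ I := by
  by_contra hxI
  have step : ∀ y : {y : R // y ∉ I}, ∃ z : {y : R // y ∉ I}, ∃ r : R,
      (z : R) = (y : R) * r * (y : R) := by
    intro y
    obtain ⟨r, hr⟩ := hp y y y.2 y.2
    exact ⟨⟨_, hr⟩, r, rfl⟩
  choose F r hr using step
  set g : ℕ → {y : R // y ∉ I} := fun n => F^[n] ⟨x, hxI⟩ with hg
  have h0 : (g 0 : R) = x := rfl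
  have hstep : ∀ i, ∃ s : R, (g (i + 1) : R) = (g i : R) * s * (g i : R) := by
    intro i
    have h1 : g (i + 1) = F (g i) := Function.iterate_succ_apply' F i _
    rw [h1]
    exact ⟨r (g i), hr (g i)⟩
  obtain ⟨n, hn⟩ := hx (fun n => (g n : R)) h0 hstep
  exact (g n).2 (by rw [hn]; exact hI.1)

/-- The set used to generate the two-sided ideal by `a`. -/
def genPart (a : R) : Set R := {t : R | ∃ u v : R, t = u * a * v}

/-- The two-sided ideal generated by `I` and `a`. -/
def genSet (I : Set R) (a : R) : Set R :=
  {z | ∃ i ∈ I, ∃ s ∈ AddSubgroup.closure (genPart a), z = i + s}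

lemma closure_mul_left {a : R} (r : R) {s : R}
    (hs : s ∈ AddSubgroup.closure (genPart a)) :
    r * s ∈ AddSubgroup.closure (genPart a) := by
  refine AddSubgroup.closure_induction (p := fun s _ => r * s ∈ AddSubgroup.closure (genPart a))
    ?_ ?_ ?_ ?_ hs
  · rintro t ⟨u, v, rfl⟩
    refine AddSubgroup.subset_closure ⟨r * u, v, ?_⟩
    rw [← mul_assoc, ← mul_assoc]
  · show r * (0 : R) ∈ AddSubgroup.closure (genPart a)
    rw [mul_zero]; exact zero_mem _
  · intro x y _ _ hx hy
    rw [mul_add]; exact add_mem hx hy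
  · intro x _ hx
    rw [mul_neg]; exact neg_mem hx

lemma closure_mul_right {a : R} (r : R) {s : R}
    (hs : s ∈ AddSubgroup.closure (genPart a)) :
    s * r ∈ AddSubgroup.closure (genPart a) := by
  refine AddSubgroup.closure_induction (p := fun s _ => s * r ∈ AddSubgroup.closure (genPart a))
    ?_ ?_ ?_ ?_ hs
  · rintro t ⟨u, v, rfl⟩
    refine AddSubgroup.subset_closure ⟨u, v * r, ?_⟩
    rw [mul_assoc, mul_assoc]
  · show (0 : R) * r ∈ AddSubgroup.closure (genPart a)
    rw [zero_mul]; exact zero_mem _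
  · intro x y _ _ hx hy
    rw [add_mul]; exact add_mem hx hy
  · intro x _ hx
    rw [neg_mul]; exact neg_mem hx

lemma genSet_ISet {I : Set R} (hI : MyISet I) (a : R) : MyISet (genSet I a) := by
  refine ⟨⟨0, hI.1, 0, zero_mem _, by simp⟩, ?_, ?_, ?_⟩
  · rintro _ ⟨i1, hi1, s1, hs1, rfl⟩ _ ⟨i2, hi2, s2, hs2, rfl⟩
    exact ⟨i1 + i2, hI.2.1 _ hi1 _ hi2, s1 + s2, add_mem hs1 hs2, by abel⟩
  · rintro r _ ⟨i, hi, s, hs, rfl⟩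
    exact ⟨r * i, hI.2.2.1 r _ hi, r * s, closure_mul_left r hs, by rw [mul_add]⟩
  · rintro r _ ⟨i, hi, s, hs, rfl⟩
    exact ⟨i * r, hI.2.2.2 r _ hi, s * r, closure_mul_right r hs, by rw [add_mul]⟩

lemma subset_genSet (I : Set R) (a : R) : I ⊆ genSet I a := by
  intro i hi
  exact ⟨i, hi, 0, zero_mem _, (add_zero i).symm⟩

lemma self_mem_genSet (I : Set R) (hI : MyISet I) (a : R) : a ∈ genSet I a := by
  refine ⟨0, hI.1, a, AddSubgroup.subset_closure ⟨1, 1, by simp⟩, (zero_add a).symm⟩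

lemma aux_inner {I : Set R} (hI : MyISet I) {x y : R} (hxy : ∀ r : R, x * r * y ∈ I)
    (u v : R) {s2 : R} (hs2 : s2 ∈ AddSubgroup.closure (genPart y)) :
    ∀ r : R, (u * x * v) * r * s2 ∈ I := by
  refine AddSubgroup.closure_induction (p := fun s _ => ∀ r : R, (u * x * v) * r * s ∈ I)
    ?_ ?_ ?_ ?_ hs2
  · rintro t ⟨u', v', rfl⟩ r
    have h1 : x * (v * r * u') * y ∈ I := hxy _
    have h2 := hI.2.2.1 u _ h1
    have h3 := hI.2.2.2 v' _ h2
    have heq : (u * x * v) * r * (u' * y * v') = u * (x * (v * r * u') * y) * v' := by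
      noncomm_ring
    rw [heq]; exact h3
  · intro r; simpa using hI.1
  · intro p q _ _ hp hq r
    rw [mul_add]; exact hI.2.1 _ (hp r) _ (hq r)
  · intro p _ hp r
    rw [mul_neg]; exact hI.negMem (hp r)

lemma aux_outer {I : Set R} (hI : MyISet I) {x y : R} (hxy : ∀ r : R, x * r * y ∈ I)
    {s1 : R} (hs1 : s1 ∈ AddSubgroup.closure (genPart x))
    {s2 : R} (hs2 : s2 ∈ AddSubgroup.closure (genPart y)) (r : R) : s1 * r * s2 ∈ I := by
  refine AddSubgroup.closure_induction (p := fun s _ => ∀ r : R, s * r * s2 ∈ I)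
    ?_ ?_ ?_ ?_ hs1 r
  · rintro t ⟨u, v, rfl⟩ r
    exact aux_inner hI hxy u v hs2 r
  · intro r; simpa using hI.1
  · intro p q _ _ hp hq r
    rw [add_mul, add_mul]; exact hI.2.1 _ (hp r) _ (hq r)
  · intro p _ hp r
    rw [neg_mul, neg_mul]; exact hI.negMem (hp r)

lemma f_mem_up {J : Set R} (hJ : MyISet J) (f : ℕ → R)
    (hf : ∀ i, ∃ r : R, f (i + 1) = f i * r * f i)
    {m : ℕ} (hm : f m ∈ J) : ∀ k, f (m + k) ∈ J := by
  intro k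
  induction k with
  | zero => simpa using hm
  | succ k ih =>
    obtain ⟨r, hr⟩ := hf (m + k)
    show f ((m + k) + 1) ∈ J
    rw [hr]
    exact hJ.2.2.2 _ _ (hJ.2.2.2 _ _ ih)

lemma exists_primeish (f : ℕ → R) (hf : ∀ i, ∃ r : R, f (i + 1) = f i * r * f i)
    (hne : ∀ n, f n ≠ 0) :
    ∃ I : Set R, MyISet I ∧ (∀ n, f n ∉ I) ∧ MyPrimeish I := by
  set S : Set (Set R) := {I | MyISet I ∧ ∀ n, f n ∉ I} with hS
  have h0S : ({0} : Set R) ∈ S := by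
    constructor
    · refine ⟨rfl, ?_, ?_, ?_⟩
      · rintro a rfl b rfl; simp
      · rintro r a rfl; simp
      · rintro r a rfl; simp
    · intro n hn
      exact hne n (by simpa using hn)
  have hchain : ∀ c ⊆ S, IsChain (fun x1 x2 => x1 ⊆ x2) c → c.Nonempty →
      ∃ ub ∈ S, ∀ s ∈ c, s ⊆ ub := by
    intro c hcS hc hcne
    refine ⟨⋃₀ c, ⟨⟨?_, ?_, ?_, ?_⟩, ?_⟩, fun s hs => Set.subset_sUnion_of_mem hs⟩
    · obtain ⟨J, hJ⟩ := hcne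
      exact ⟨J, hJ, (hcS hJ).1.1⟩
    · rintro a ⟨J1, hJ1, haJ⟩ b ⟨J2, hJ2, hbJ⟩
      rcases hc.total hJ1 hJ2 with h | h
      · exact ⟨J2, hJ2, (hcS hJ2).1.2.1 _ (h haJ) _ hbJ⟩
      · exact ⟨J1, hJ1, (hcS hJ1).1.2.1 _ haJ _ (h hbJ)⟩
    · rintro r a ⟨J, hJ, haJ⟩
      exact ⟨J, hJ, (hcS hJ).1.2.2.1 r _ haJ⟩
    · rintro r a ⟨J, hJ, haJ⟩
      exact ⟨J, hJ, (hcS hJ).1.2.2.2 r _ haJ⟩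
    · rintro n ⟨J, hJ, hfn⟩
      exact (hcS hJ).2 n hfn
  obtain ⟨I, -, hImax⟩ := zorn_subset_nonempty S hchain {0} h0S
  obtain ⟨hI, hdis⟩ := hImax.1
  refine ⟨I, hI, hdis, ?_⟩
  intro x y hx hy
  by_contra hcon
  push_neg at hcon
  have hgen : ∀ z : R, z ∉ I → ∃ m, f m ∈ genSet I z := by
    intro z hz
    by_contra hng
    push_neg at hng
    have hmem : genSet I z ∈ S := ⟨genSet_ISet hI z, hng⟩
    have hsub : genSet I z ⊆ I := hImax.2 hmem (subset_genSet I z)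
    exact hz (hsub (self_mem_genSet I hI z))
  obtain ⟨m, hm⟩ := hgen x hx
  obtain ⟨k, hk⟩ := hgen y hy
  have hmx : f (m + k) ∈ genSet I x := f_mem_up (genSet_ISet hI x) f hf hm k
  have hky : f (k + m) ∈ genSet I y := f_mem_up (genSet_ISet hI y) f hf hk m
  rw [Nat.add_comm k m] at hky
  obtain ⟨i1, hi1, s1, hs1, heq1⟩ := hmx
  obtain ⟨i2, hi2, s2, hs2, heq2⟩ := hky
  obtain ⟨r, hr⟩ := hf (m + k)
  have hin : f (m + k + 1) ∈ I := by
    have hsplit : f (m + k + 1) = i1 * (r * (i2 + s2)) + ((s1 * r) * i2 + s1 * r * s2) := by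
      rw [hr]
      calc f (m + k) * r * f (m + k) = (i1 + s1) * r * (i2 + s2) := by rw [← heq1, ← heq2]
        _ = i1 * (r * (i2 + s2)) + ((s1 * r) * i2 + s1 * r * s2) := by noncomm_ring
    rw [hsplit]
    exact hI.2.1 _ (hI.2.2.2 _ _ hi1) _
      (hI.2.1 _ (hI.2.2.1 _ _ hi2) _ (aux_outer hI hcon hs1 hs2 r))
  exact hdis (m + k + 1) hin

lemma sn_zero : IsStronglyNilpotent (0 : R) := fun _ h0 _ => ⟨0, h0⟩

lemma sn_add {a b : R} (ha : IsStronglyNilpotent a) (hb : IsStronglyNilpotent b) :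
    IsStronglyNilpotent (a + b) := by
  intro f hf0 hf
  by_contra h
  push_neg at h
  obtain ⟨I, hI, hfI, hp⟩ := exists_primeish f hf h
  exact hfI 0 (by
    rw [hf0]
    exact hI.2.1 a (sn_mem_of_primeish hI hp ha) b (sn_mem_of_primeish hI hp hb))

lemma sn_mul_left (r : R) {a : R} (ha : IsStronglyNilpotent a) :
    IsStronglyNilpotent (r * a) := by
  intro f hf0 hf
  by_contra h
  push_neg at h
  obtain ⟨I, hI, hfI, hp⟩ := exists_primeish f hf h
  exact hfI 0 (by rw [hf0]; exact hI.2.2.1 r a (sn_mem_of_primeish hI hp ha))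

lemma sn_mul_right (r : R) {a : R} (ha : IsStronglyNilpotent a) :
    IsStronglyNilpotent (a * r) := by
  intro f hf0 hf
  by_contra h
  push_neg at h
  obtain ⟨I, hI, hfI, hp⟩ := exists_primeish f hf h
  exact hfI 0 (by rw [hf0]; exact hI.2.2.2 r a (sn_mem_of_primeish hI hp ha))

lemma sn_neg {a : R} (ha : IsStronglyNilpotent a) : IsStronglyNilpotent (-a) := by
  have := sn_mul_left (-1 : R) ha
  rwa [neg_one_mul] at this

lemma sn_nilpotent {a : R} (ha : IsStronglyNilpotent a) : IsNilpotent a := by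
  have hstep : ∀ i : ℕ, a ^ 2 ^ (i + 1) = a ^ 2 ^ i * 1 * a ^ 2 ^ i := by
    intro i; rw [mul_one, pow_succ, pow_mul, sq]
  obtain ⟨n, hn⟩ := ha (fun i => a ^ (2 ^ i)) (by simp) (fun i => ⟨1, hstep i⟩)
  exact ⟨2 ^ n, hn⟩

end Aux

/-- **Theorem 2.10.** A ring `R` is uniquely P-clean iff `R` is abelian and
strongly P-clean. -/
theorem uniquelyPCleanRing_iff_abelian_and_stronglyPClean (R : Type*) [Ring R] :
    UniquelyPCleanRing R ↔ IsAbelianRing R ∧ StronglyPCleanRing R := by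
  constructor
  · intro h
    have key : ∀ x : R, x * x - x ∈ primeRadical R := by
      intro x
      obtain ⟨e, ⟨he, hw⟩, -⟩ := h x
      have h2 : e * e = e := he
      have hkey : x * x - x = e * (x - e) + ((x - e) * e + ((x - e) * (x - e) + -(x - e))) := by
        calc x * x - x
            = e * (x - e) + ((x - e) * e + ((x - e) * (x - e) + -(x - e))) + (e * e - e) := by
              noncomm_ring
          _ = _ := by rw [h2, sub_self, add_zero]
      show IsStronglyNilpotent (x * x - x)
      rw [hkey]
      exact sn_add (sn_mul_left e hw)
        (sn_add (sn_mul_right e hw) (sn_add (sn_mul_left (x - e) hw) (sn_neg hw)))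
    have hab : IsAbelianRing R := by
      intro e he r
      have h2 : e * e = e := he
      have main : ∀ z : R, z * z = 0 → e * z = z → z * e = 0 → z = 0 := by
        intro z hz hez hze
        have hzP : z ∈ primeRadical R := by
          have h1 := key z
          have h' : z * z - z = -z := by rw [hz, zero_sub]
          rw [h'] at h1
          show IsStronglyNilpotent z
          have := sn_neg h1
          rwa [neg_neg] at this
        have hid : IsIdempotentElem (e + z) := by
          show (e + z) * (e + z) = e + z
          calc (e + z) * (e + z) = e * e + e * z + (z * e + z * z) := by noncomm_ring
            _ = e + z := by rw [h2, hez, hze, hz]; abel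
        obtain ⟨g, -, hgu⟩ := h (e + z)
        have hA : e + z = g := hgu _ ⟨hid, by
          show IsStronglyNilpotent (e + z - (e + z))
          rw [sub_self]; exact sn_zero⟩
        have hB : e = g := hgu _ ⟨he, by
          show IsStronglyNilpotent (e + z - e)
          rw [add_sub_cancel_left]; exact hzP⟩
        have : e + z = e := hA.trans hB.symm
        exact (add_eq_left).mp this
      have h1 : e * r - e * r * e = 0 := by
        refine main _ ?_ ?_ ?_
        · calc (e * r - e * r * e) * (e * r - e * r * e)
              = e * r * ((1 - e) * e) * (r * (1 - e)) := by noncomm_ring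
            _ = 0 := by rw [sub_mul, one_mul, h2, sub_self]; simp
        · calc e * (e * r - e * r * e) = (e * e) * r - (e * e) * r * e := by noncomm_ring
            _ = e * r - e * r * e := by rw [h2]
        · calc (e * r - e * r * e) * e = e * r * e - e * r * (e * e) := by noncomm_ring
            _ = 0 := by rw [h2]; simp
      have h1' : e * r = e * r * e := by
        have := sub_eq_zero.mp h1; exact this
      have h2' : r * e - e * r * e = 0 := by
        -- here z = (1-e)*r*e, with e*z = 0, z*e = z ; use main with roles adapted:
        -- main requires e*z = z and z*e = 0, so use symmetric argument directly
        have hz : (r * e - e * r * e) * (r * e - e * r * e) = 0 := by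
          calc (r * e - e * r * e) * (r * e - e * r * e)
              = (1 - e) * r * (e * (1 - e)) * (r * e) := by noncomm_ring
            _ = 0 := by rw [mul_sub, mul_one, h2, sub_self]; simp
        have hze : (r * e - e * r * e) * e = r * e - e * r * e := by
          calc (r * e - e * r * e) * e = r * (e * e) - e * r * (e * e) := by noncomm_ring
            _ = r * e - e * r * e := by rw [h2]
        have hez : e * (r * e - e * r * e) = 0 := by
          calc e * (r * e - e * r * e) = e * r * e - (e * e) * r * e := by noncomm_ring
            _ = 0 := by rw [h2]; simp
        -- symmetric version of `main`
        set z := r * e - e * r * e with hzdef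
        have hzP : z ∈ primeRadical R := by
          have hk := key z
          have h' : z * z - z = -z := by rw [hz, zero_sub]
          rw [h'] at hk
          show IsStronglyNilpotent z
          have := sn_neg hk
          rwa [neg_neg] at this
        have hid : IsIdempotentElem (e + z) := by
          show (e + z) * (e + z) = e + z
          calc (e + z) * (e + z) = e * e + e * z + (z * e + z * z) := by noncomm_ring
            _ = e + z := by rw [h2, hez, hze, hz]; abel
        obtain ⟨g, -, hgu⟩ := h (e + z)
        have hA : e + z = g := hgu _ ⟨hid, by
          show IsStronglyNilpotent (e + z - (e + z))
          rw [sub_self]; exact sn_zero⟩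
        have hB : e = g := hgu _ ⟨he, by
          show IsStronglyNilpotent (e + z - e)
          rw [add_sub_cancel_left]; exact hzP⟩
        have : e + z = e := hA.trans hB.symm
        exact (add_eq_left).mp this
      have h2'' : r * e = e * r * e := sub_eq_zero.mp h2'
      rw [h1', h2'']
    refine ⟨hab, ?_⟩
    intro x
    obtain ⟨e, ⟨he, hw⟩, -⟩ := h x
    exact ⟨e, x - e, he, hw, by abel, hab e he (x - e)⟩
  · rintro ⟨hab, hspc⟩ x
    obtain ⟨e, w, he, hw, hx, -⟩ := hspc x
    have hxe : x - e = w := by rw [hx]; abel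
    refine ⟨e, ⟨he, by rw [hxe]; exact hw⟩, ?_⟩
    rintro f ⟨hf, hwf⟩
    have hw1 : IsStronglyNilpotent (x - e) := by rw [hxe]; exact hw
    have hce : ∀ s : R, e * s = s * e := hab e he
    have hcf : ∀ s : R, f * s = s * f := hab f hf
    have h2 : e * e = e := he
    have h3 : f * f = f := hf
    have h4 : e * f = f * e := hce f
    -- e - f is nilpotent
    have hcomm : Commute (x - f) (-(x - e)) := by
      have hkey : (x - f) * (-(x - e)) - (-(x - e)) * (x - f)
          = (x * e - e * x) + ((f * x - x * f) + (e * f - f * e)) := by noncomm_ring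
      have hxe' : e * x = x * e := hce x
      have hxf' : f * x = x * f := hcf x
      rw [hxe', hxf', h4] at hkey
      simp only [sub_self, add_zero] at hkey
      exact sub_eq_zero.mp hkey
    have hnil : IsNilpotent (e - f) := by
      have hn1 : IsNilpotent (x - f) := sn_nilpotent hwf
      have hn2 : IsNilpotent (-(x - e)) := (sn_nilpotent hw1).neg
      have := hcomm.isNilpotent_add hn1 hn2
      have heq : (x - f) + (-(x - e)) = e - f := by abel
      rwa [heq] at this
    -- (e - f)^3 = e - f
    have hA : e * f * e = e * f := by rw [mul_assoc, ← h4, ← mul_assoc, h2]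
    have hB : f * e * f = e * f := by rw [← h4, mul_assoc, h3]
    have hff : e * f * f = e * f := by rw [mul_assoc, h3]
    have hee : f * e * e = f * e := by rw [mul_assoc, h2]
    have he3 : e * e * e = e := by rw [h2, h2]
    have hef' : e * e * f = e * f := by rw [h2]
    have hffe : f * f * e = f * e := by rw [h3]
    have hf3 : f * f * f = f := by rw [h3, h3]
    have hcube : (e - f) * (e - f) * (e - f) = e - f := by
      calc (e - f) * (e - f) * (e - f)
          = e * e * e - e * e * f - e * f * e + e * f * f - f * e * e + f * e * f
            + f * f * e - f * f * f := by noncomm_ring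
        _ = e - e * f - e * f + e * f - f * e + e * f + f * e - f := by
            rw [he3, hef', hA, hff, hee, hB, hffe, hf3]
        _ = e - f := by abel
    have hpow : ∀ k : ℕ, (e - f) ^ (2 * k + 1) = e - f := by
      intro k
      induction k with
      | zero => rw [Nat.mul_zero, Nat.zero_add, pow_one]
      | succ k ih =>
        have hexp : 2 * (k + 1) + 1 = (2 * k + 1) + 2 := by ring
        rw [hexp, pow_add, ih, sq, ← mul_assoc, hcube]
    obtain ⟨n, hn⟩ := hnil
    have hzero : e - f = 0 := by
      have h5 : (e - f) ^ (2 * n + 1) = e - f := hpow n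
      have h6 : (e - f) ^ (2 * n + 1) = (e - f) ^ n * (e - f) ^ (n + 1) := by
        rw [← pow_add]; congr 1; ring
      rw [h6, hn, zero_mul] at h5
      exact h5.symm
    have := sub_eq_zero.mp hzero
    exact this.symm
end

section
/- Let R be a ring and let a = e + w be a strongly P-clean decomposition of a ∈ R (so e is an idempotent, w ∈ P(R), and ew = we). Then the left annihilator of a is contained in the left annihilator of e, and the right annihilator of a is contained in the right annihilator of e; that is, for every r ∈ R, ra = 0 implies re = 0, and ar = 0 implies er = 0. -/
/-- **Lemma 3.1.** If `a = e + w` is a strongly P-clean decomposition of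
`a ∈ R` (`e` idempotent, `w ∈ P(R)`, `ew = we`), then `annₗ(a) ⊆ annₗ(e)`
and `annᵣ(a) ⊆ annᵣ(e)`: for every `r ∈ R`, `ra = 0` implies `re = 0`, and
`ar = 0` implies `er = 0`. -/
theorem annihilators_of_stronglyPClean_decomposition
    {R : Type*} [Ring R] (a e w : R) (he : IsIdempotentElem e)
    (hw : w ∈ primeRadical R) (hsum : a = e + w) (hcomm : e * w = w * e) :
    (∀ r : R, r * a = 0 → r * e = 0) ∧ (∀ r : R, a * r = 0 → e * r = 0) := by
  -- strong nilpotence implies nilpotence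
  obtain ⟨n, hn⟩ := hw (fun i => w ^ (2 ^ i)) (by simp)
    (fun i => ⟨1, show w ^ 2 ^ (i+1) = w ^ 2 ^ i * 1 * w ^ 2 ^ i by rw [mul_one, ← pow_add, pow_succ, mul_two]⟩)
  constructor
  · intro r hr
    rw [hsum, mul_add] at hr
    have h1 : r * e = r * e * (-w) := by
      have : r * e = -(r * w) := by rw [eq_neg_iff_add_eq_zero]; exact hr
      calc r * e = r * e * e := by rw [mul_assoc, he]
        _ = -(r * w) * e := by rw [this]
        _ = -(r * (w * e)) := by noncomm_ring
        _ = -(r * (e * w)) := by rw [hcomm]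
        _ = r * e * (-w) := by noncomm_ring
    have key : ∀ m : ℕ, r * e = r * e * (-w) ^ m := by
      intro m
      induction m with
      | zero => simp
      | succ k ih => rw [pow_succ, ← mul_assoc, ← ih, ← h1]
    have := key (2 ^ n)
    rw [neg_pow, hn, mul_zero, mul_zero] at this
    exact this
  · intro r hr
    rw [hsum, add_mul] at hr
    have h1 : e * r = (-w) * (e * r) := by
      have : e * r = -(w * r) := by rw [eq_neg_iff_add_eq_zero]; exact hr
      calc e * r = e * (e * r) := by rw [← mul_assoc, he]
        _ = e * (-(w * r)) := by rw [this]
        _ = -((e * w) * r) := by noncomm_ring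
        _ = -((w * e) * r) := by rw [hcomm]
        _ = (-w) * (e * r) := by noncomm_ring
    have key : ∀ m : ℕ, e * r = (-w) ^ m * (e * r) := by
      intro m
      induction m with
      | zero => simp
      | succ k ih => rw [pow_succ', mul_assoc, ← ih, ← h1]
    have := key (2 ^ n)
    rw [neg_pow, hn, mul_zero, zero_mul] at this
    exact this
end

section
/- Let R be a ring and let f ∈ R be an idempotent. Then an element a ∈ fRf is strongly P-clean as an element of R if and only if a is strongly P-clean as an element of the corner ring fRf (a ring with identity f). -/
/-- The corner set `fRf = {x | fx = x and xf = x}` as a non-unital subring. -/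
def cornerSubring {R : Type*} [Ring R] (f : R) : NonUnitalSubring R where
  carrier := {x | f * x = x ∧ x * f = x}
  add_mem' := by
    rintro a b ⟨ha1, ha2⟩ ⟨hb1, hb2⟩
    exact ⟨by rw [mul_add, ha1, hb1], by rw [add_mul, ha2, hb2]⟩
  zero_mem' := by simp
  neg_mem' := by
    rintro a ⟨ha1, ha2⟩
    exact ⟨by rw [mul_neg, ha1], by rw [neg_mul, ha2]⟩
  mul_mem' := by
    rintro a b ⟨ha1, ha2⟩ ⟨hb1, hb2⟩
    exact ⟨by rw [← mul_assoc, ha1], by rw [mul_assoc, hb2]⟩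

/-- The corner ring `fRf` of an idempotent `f`: a ring with identity `f`. -/
def cornerRing {R : Type*} [Ring R] (f : R) (hf : IsIdempotentElem f) :
    Ring (cornerSubring f) :=
  { (inferInstance : NonUnitalRing (cornerSubring f)) with
    one := ⟨f, hf, hf⟩
    one_mul := fun x => Subtype.ext x.2.1
    mul_one := fun x => Subtype.ext x.2.2 }

section auxStronglyPClean
variable {R : Type*} [Ring R]

/-- A right multiple of a strongly nilpotent element is strongly nilpotent. -/
lemma IsStronglyNilpotent.mul_right_aux {w : R} (hw : IsStronglyNilpotent w) (c : R) :
    IsStronglyNilpotent (w * c) := by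
  intro g hg0 hg
  choose r hr using hg
  let h : ℕ → R := fun n => Nat.rec w (fun i hi => hi * (c * r i) * hi) n
  have hstep : ∀ i, h (i + 1) = h i * (c * r i) * h i := fun i => rfl
  have key : ∀ i, g i = h i * c := by
    intro i
    induction i with
    | zero => exact hg0
    | succ i ih =>
      rw [hr i, ih, hstep]
      simp only [mul_assoc]
  obtain ⟨n, hn⟩ := hw h rfl (fun i => ⟨c * r i, hstep i⟩)
  exact ⟨n, by rw [key n, hn, zero_mul]⟩

/-- Strongly nilpotent elements are nilpotent. -/
lemma IsStronglyNilpotent.pow_aux {w : R} (hw : IsStronglyNilpotent w) :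
    ∃ n, w ^ (2 ^ n) = 0 :=
  hw (fun i => w ^ (2 ^ i)) (by simp)
    (fun i => ⟨1, by simp only [mul_one]; rw [pow_succ, mul_two, pow_add]⟩)

/-- Transfer of strong nilpotency between `R` and the corner ring. -/
lemma isStronglyNilpotent_corner_iff (f : R) (hf : IsIdempotentElem f)
    (w : R) (hw : w ∈ cornerSubring f) :
    letI : Ring (cornerSubring f) := cornerRing f hf
    (IsStronglyNilpotent w ↔ IsStronglyNilpotent (⟨w, hw⟩ : cornerSubring f)) := by
  letI : Ring (cornerSubring f) := cornerRing f hf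
  constructor
  · intro h g hg0 hgstep
    have h0 : ((g 0 : cornerSubring f) : R) = w := by rw [hg0]
    have hstep : ∀ i, ∃ r : R, ((g (i+1) : cornerSubring f) : R) = (g i : R) * r * (g i : R) := by
      intro i
      obtain ⟨r, hr⟩ := hgstep i
      exact ⟨(r : R), by rw [hr]; rfl⟩
    obtain ⟨n, hn⟩ := h (fun i => ((g i : cornerSubring f) : R)) h0 hstep
    exact ⟨n, Subtype.ext hn⟩
  · intro h g hg0 hgstep
    choose r hr using hgstep
    have hmem : ∀ i, g i ∈ cornerSubring f := by
      intro i
      induction i with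
      | zero => rw [hg0]; exact hw
      | succ i ih =>
        rw [hr i]
        refine ⟨?_, ?_⟩
        · rw [← mul_assoc, ← mul_assoc, ih.1]
        · rw [mul_assoc, ih.2]
    have hrmem : ∀ i, f * (f * r i * f) = f * r i * f ∧ (f * r i * f) * f = f * r i * f := by
      intro i
      constructor
      · rw [← mul_assoc, ← mul_assoc, hf]
      · rw [mul_assoc, hf]
    obtain ⟨n, hn⟩ := h (fun i => (⟨g i, hmem i⟩ : cornerSubring f))
      (Subtype.ext hg0)
      (by
        intro i
        refine ⟨⟨f * r i * f, hrmem i⟩, Subtype.ext ?_⟩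
        show g (i+1) = g i * (f * r i * f) * g i
        rw [hr i]
        have h1 : g i * (f * r i * f) * g i = (g i * f) * r i * (f * g i) := by
          simp only [mul_assoc]
        rw [h1, (hmem i).2, (hmem i).1])
    exact ⟨n, congrArg Subtype.val hn⟩

end auxStronglyPClean

/-- **Theorem 3.2.** Let `f ∈ R` be an idempotent. An element `a ∈ fRf` is
strongly P-clean in `R` iff it is strongly P-clean in the corner ring `fRf`
(a ring with identity `f`). -/
theorem isStronglyPClean_corner_iff {R : Type*} [Ring R]
    (f : R) (hf : IsIdempotentElem f) (a : R) (ha : a ∈ cornerSubring f) :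
    letI : Ring (cornerSubring f) := cornerRing f hf
    (IsStronglyPClean a ↔ IsStronglyPClean (⟨a, ha⟩ : cornerSubring f)) := by
  
  letI : Ring (cornerSubring f) := cornerRing f hf
  obtain ⟨haf1, haf2⟩ := ha
  constructor
  · rintro ⟨e, w, he, hw, hae, hcomm⟩
    -- the element `T = a - a²` is strongly nilpotent in `R`
    set T : R := a - a ^ 2 with hTdef
    have hTw : T = w * (1 - e - e - w) := by
      have hsq : (e + w) ^ 2 = e + (w * e + (w * e + w * w)) := by
        have h1 : (e + w) ^ 2 = e * e + (e * w + (w * e + w * w)) := by noncomm_ring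
        rw [h1, he, hcomm]
      rw [hTdef, hae, hsq]
      have h2 : w * (1 - e - e - w) = w - (w * e + (w * e + w * w)) := by noncomm_ring
      rw [h2]
      abel
    have hTsn : IsStronglyNilpotent T := by
      rw [hTw]; exact IsStronglyNilpotent.mul_right_aux hw _
    obtain ⟨N, hTN⟩ := hTsn.pow_aux
    -- Newton iteration producing an idempotent congruent to `a` modulo `T`
    let A : ℕ → R := fun n => Nat.rec a (fun _ x => 3 * x ^ 2 - 2 * x ^ 3) n
    have hA0 : A 0 = a := rfl
    have hAs : ∀ k, A (k + 1) = 3 * (A k) ^ 2 - 2 * (A k) ^ 3 := fun k => rfl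
    have hAcomm : ∀ k, Commute a (A k) := by
      intro k
      induction k with
      | zero => exact Commute.refl a
      | succ k ih =>
        rw [hAs]
        exact ((Commute.ofNat_right a 3).mul_right (ih.pow_right 2)).sub_right
          ((Commute.ofNat_right a 2).mul_right (ih.pow_right 3))
    have hAmem : ∀ k, f * A k = A k ∧ A k * f = A k := by
      intro k
      induction k with
      | zero => exact ⟨haf1, haf2⟩
      | succ k ih =>
        rw [hAs]
        constructor
        · have h1 : f * (3 * (A k) ^ 2 - 2 * (A k) ^ 3) =
              3 * ((f * A k) * A k) - 2 * ((f * A k) * A k ^ 2) := by noncomm_ring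
          rw [h1, ih.1]; noncomm_ring
        · have h1 : (3 * (A k) ^ 2 - 2 * (A k) ^ 3) * f =
              3 * (A k * (A k * f)) - 2 * (A k ^ 2 * (A k * f)) := by noncomm_ring
          rw [h1, ih.2]; noncomm_ring
    have hAnil : ∀ k, ∃ s : R, A k - (A k) ^ 2 = T ^ (2 ^ k) * s ∧ Commute a s := by
      intro k
      induction k with
      | zero => exact ⟨1, by rw [hA0, pow_zero, pow_one, mul_one], Commute.one_right a⟩
      | succ k ih =>
        obtain ⟨s, hs, hcs⟩ := ih
        have hu : Commute a (3 + 4 * A k - 4 * (A k) ^ 2) :=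
          ((Commute.ofNat_right a 3).add_right
            ((Commute.ofNat_right a 4).mul_right (hAcomm k))).sub_right
            ((Commute.ofNat_right a 4).mul_right ((hAcomm k).pow_right 2))
        refine ⟨s * (s * (3 + 4 * A k - 4 * (A k) ^ 2)),
          ?_, hcs.mul_right (hcs.mul_right hu)⟩
        have hid : A (k+1) - (A (k+1)) ^ 2 =
            (A k - (A k) ^ 2) ^ 2 * (3 + 4 * A k - 4 * (A k) ^ 2) := by
          rw [hAs]; noncomm_ring
        have hsT : Commute s (T ^ (2 ^ k)) := by
          have hsa : Commute s a := hcs.symm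
          have : Commute s T := by
            rw [hTdef]
            exact hsa.sub_right (hsa.pow_right 2)
          exact this.pow_right (2 ^ k)
        calc A (k+1) - (A (k+1)) ^ 2
            = (T ^ (2 ^ k) * s) ^ 2 * (3 + 4 * A k - 4 * (A k) ^ 2) := by rw [hid, hs]
          _ = T ^ (2 ^ k) * (s * T ^ (2 ^ k)) * (s * (3 + 4 * A k - 4 * (A k) ^ 2)) := by
              rw [sq]; simp only [mul_assoc]
          _ = T ^ (2 ^ (k+1)) * (s * (s * (3 + 4 * A k - 4 * (A k) ^ 2))) := by
              rw [hsT.eq, pow_succ 2 k, mul_two, pow_add]; simp only [mul_assoc]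
    have hAdiff : ∀ k, ∃ q : R, a - A k = T * q := by
      intro k
      induction k with
      | zero => exact ⟨0, by rw [hA0, sub_self, mul_zero]⟩
      | succ k ih =>
        obtain ⟨q, hq⟩ := ih
        obtain ⟨s, hs, -⟩ := hAnil k
        have hstep : A (k+1) - A k = (A k - (A k) ^ 2) * (2 * A k - 1) := by
          rw [hAs]; noncomm_ring
        have hpow : T ^ (2 ^ k) = T * T ^ (2 ^ k - 1) := by
          rw [← pow_succ']
          congr 1
          have h1 : 1 ≤ 2 ^ k := Nat.one_le_two_pow
          omega
        refine ⟨q - T ^ (2 ^ k - 1) * s * (2 * A k - 1), ?_⟩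
        have h2 : a - A (k+1) = (a - A k) - (A (k+1) - A k) := by abel
        rw [h2, hq, hstep, hs, hpow]
        simp only [mul_sub, mul_assoc]
    -- the idempotent and the strongly nilpotent part
    obtain ⟨s, hs, -⟩ := hAnil N
    have hεidem : IsIdempotentElem (A N) := by
      have h0 : A N - (A N) ^ 2 = 0 := by rw [hs, hTN, zero_mul]
      have h2 : (A N) ^ 2 = A N := (sub_eq_zero.mp h0).symm
      show A N * A N = A N
      rw [← sq, h2]
    obtain ⟨q, hq⟩ := hAdiff N
    have hvsn : IsStronglyNilpotent (a - A N) := by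
      rw [hq, hTw, mul_assoc]
      exact IsStronglyNilpotent.mul_right_aux hw _
    have hvmem : (a - A N) ∈ cornerSubring f := by
      refine ⟨?_, ?_⟩
      · rw [mul_sub, haf1, (hAmem N).1]
      · rw [sub_mul, haf2, (hAmem N).2]
    have hεv : A N * (a - A N) = (a - A N) * A N :=
      ((hAcomm N).symm.sub_right (Commute.refl (A N))).eq
    refine ⟨⟨A N, hAmem N⟩, ⟨a - A N, hvmem⟩, ?_, ?_, ?_, ?_⟩
    · exact Subtype.ext hεidem
    · exact (isStronglyNilpotent_corner_iff f hf _ hvmem).mp hvsn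
    · exact Subtype.ext (by show a = A N + (a - A N); abel)
    · exact Subtype.ext hεv
  · rintro ⟨ε, v, hε, hv, hav, hcomm⟩
    refine ⟨(ε : R), (v : R), ?_, ?_, ?_, ?_⟩
    · exact congrArg Subtype.val hε
    · refine (isStronglyNilpotent_corner_iff f hf (v : R) v.2).mpr ?_
      exact hv
    · exact congrArg Subtype.val hav
    · exact congrArg Subtype.val hcomm
end

section
/- A ring R is strongly P-clean if and only if for every idempotent e ∈ R the corner ring eRe is strongly P-clean. -/
lemma sn_pow {R : Type*} [Ring R] {w : R}
    (h : IsStronglyNilpotent w) : ∃ n, 1 ≤ n ∧ w ^ n = 0 := by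
  obtain ⟨n, hn⟩ := h (fun i => w ^ (2 ^ i)) (by simp)
    (fun i => ⟨1, by
      show w ^ 2 ^ (i + 1) = w ^ 2 ^ i * 1 * w ^ 2 ^ i
      rw [mul_one, ← pow_add, pow_succ, mul_two]⟩)
  exact ⟨2 ^ n, Nat.one_le_two_pow, hn⟩

lemma corner_mem_aux {R : Type*} [Ring R] {e x g w : R}
    (hex : e * x = x) (hxe : x * e = x) (hg : g * g = g)
    (hcomm : g * w = w * g) (hx : x = g + w) {n : ℕ} (hn1 : 1 ≤ n)
    (hn : w ^ n = 0) : e * g = g ∧ g * e = g := by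
  have hxw : Commute x w := by
    show x * w = w * x
    rw [hx, add_mul, mul_add, hcomm]
  have hxw' : Commute x (-w) := hxw.neg_right
  have hpow : ∀ m : ℕ, g ^ (m + 1) = g := by
    intro m
    induction m with
    | zero => simp
    | succ k ih => rw [pow_succ, ih, hg]
  have hgn : g ^ n = g := by
    obtain ⟨m, rfl⟩ : ∃ m, n = m + 1 := ⟨n - 1, by omega⟩
    exact hpow m
  have hgsub : x - w = g := by rw [hx, add_sub_cancel_right]
  have hexp : g = ∑ m ∈ Finset.range (n + 1),
      x ^ m * (-w) ^ (n - m) * (n.choose m : R) := by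
    rw [← hgn, ← hgsub, sub_eq_add_neg, hxw'.add_pow]
  have hterm0 : ∀ m ∈ Finset.range (n + 1), m = 0 →
      x ^ m * (-w) ^ (n - m) * (n.choose m : R) = 0 := by
    intro m _ hm
    subst hm
    rw [pow_zero, one_mul, Nat.sub_zero, neg_pow, hn, mul_zero, zero_mul]
  have hexk : ∀ k : ℕ, e * x ^ (k + 1) = x ^ (k + 1) := by
    intro k
    rw [pow_succ', ← mul_assoc, hex]
  have hxke : ∀ k : ℕ, x ^ (k + 1) * e = x ^ (k + 1) := by
    intro k
    rw [pow_succ, mul_assoc, hxe]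
  constructor
  · rw [hexp, Finset.mul_sum]
    apply Finset.sum_congr rfl
    intro m hm
    rcases m with _ | k
    · rw [hterm0 0 hm rfl, mul_zero]
    · rw [← mul_assoc, ← mul_assoc, hexk k]
  · rw [hexp, Finset.sum_mul]
    apply Finset.sum_congr rfl
    intro m hm
    rcases m with _ | k
    · rw [hterm0 0 hm rfl, zero_mul]
    · have hA : x ^ (k + 1) * (-w) ^ (n - (k + 1)) =
          (-w) ^ (n - (k + 1)) * x ^ (k + 1) := (hxw'.pow_pow _ _).eq
      have hC := (Nat.cast_commute (n.choose (k + 1)) (x ^ (k + 1))).eq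
      rw [hA, mul_assoc ((-w) ^ (n - (k + 1))) (x ^ (k + 1)), ← hC,
        ← mul_assoc ((-w) ^ (n - (k + 1))), mul_assoc _ (x ^ (k + 1)) e,
        hxke k, mul_assoc ((-w) ^ (n - (k + 1))), hC, ← mul_assoc, ← hA]

/-- **Corollary 3.3.** A ring `R` is strongly P-clean iff for every idempotent
`e ∈ R` the corner ring `eRe` is strongly P-clean. -/
theorem stronglyPCleanRing_iff_corners {R : Type*} [Ring R] :
    StronglyPCleanRing R ↔
      ∀ e : R, ∀ he : IsIdempotentElem e,
        letI : Ring (cornerSubring e) := cornerRing e he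
        StronglyPCleanRing (cornerSubring e) := by
  constructor
  · -- forward
    intro hR e he
    intro x
    obtain ⟨g, w, hg, hw, hsum, hc⟩ := hR x.val
    obtain ⟨n, hn1, hn⟩ := sn_pow hw
    obtain ⟨heg, hge⟩ := corner_mem_aux x.2.1 x.2.2 hg hc hsum hn1 hn
    have hwv : (x.val - g) = w := by rw [hsum, add_sub_cancel_left]
    have hew : e * w = w := by rw [← hwv, mul_sub, x.2.1, heg]
    have hwe : w * e = w := by rw [← hwv, sub_mul, x.2.2, hge]
    refine ⟨⟨g, heg, hge⟩, ⟨w, hew, hwe⟩, Subtype.ext hg, ?_, Subtype.ext hsum,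
      Subtype.ext hc⟩
    intro F hF0 hFrec
    obtain ⟨m, hm⟩ := hw (fun i => (F i).val) (congrArg Subtype.val hF0)
      (fun i => by
        obtain ⟨r, hr⟩ := hFrec i
        exact ⟨r.val, congrArg Subtype.val hr⟩)
    exact ⟨m, Subtype.ext hm⟩
  · -- backward
    intro h x
    have h1 := h 1 IsIdempotentElem.one
    obtain ⟨E, W, hE, hW, hsum, hc⟩ := h1 ⟨x, one_mul x, mul_one x⟩
    refine ⟨E.val, W.val, congrArg Subtype.val hE, ?_,
      congrArg Subtype.val hsum, congrArg Subtype.val hc⟩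
    intro f hf0 hrec
    obtain ⟨m, hm⟩ := hW (fun i => ⟨f i, one_mul _, mul_one _⟩)
      (Subtype.ext hf0)
      (fun i => by
        obtain ⟨r, hr⟩ := hrec i
        exact ⟨⟨r, one_mul r, mul_one r⟩, Subtype.ext hr⟩)
    exact ⟨m, congrArg Subtype.val hm⟩
end
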